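/- arXiv:2312.14801 — 7 statements merged into one kernel-verified Lean document; each statement's English description precedes it below -/
import Mathlib

section
/- Let Z and Y be real Hilbert spaces, B : Z → Y a Fredholm bounded linear operator, and Q : Z → Z a bounded self-adjoint linear operator such that ⟪Qz, z⟫ ≥ α‖z‖² for all z ∈ ker B, for some α > 0. Then the bounded linear operator A : Z × Y → Z × Y defined by A(z, y) = (Qz + B†y, Bz) is Fredholm, i.e. its kernel is finite-dimensional and its range is closed with finite codimension. -/
open ContinuousLinearMap Submodule

/-- A submodule containing a closed submodule of finite codimension is closed. -/
lemma aux_closed_of_le {E : Type*} [NormedAddCommGroup E] [NormedSpace ℝ E] [CompleteSpace E]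
    {p N : Submodule ℝ E} (hpN : p ≤ N) (hp : IsClosed (p : Set E))
    [FiniteDimensional ℝ (E ⧸ p)] : IsClosed (N : Set E) := by
  obtain ⟨π, hπ⟩ := Submodule.ClosedComplemented.of_quotient_finiteDimensional hp
  set P : E →L[ℝ] E := ContinuousLinearMap.id ℝ E - p.subtypeL.comp π with hPdef
  have hPval : ∀ x : E, P x = x - π x := fun x => rfl
  have hsub : ∀ x : E, x - P x ∈ p := by
    intro x
    have h : x - P x = (π x : E) := by rw [hPval]; abel
    rw [h]; exact (π x).2
  have hker : ∀ v ∈ p, P v = 0 := by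
    intro v hv
    have h : π v = (⟨v, hv⟩ : p) := hπ ⟨v, hv⟩
    rw [hPval, h]; simp
  have hkerle : p ≤ LinearMap.ker (P : E →ₗ[ℝ] E) := fun v hv => by
    simpa using hker v hv
  have hrange : LinearMap.range (P : E →ₗ[ℝ] E)
      = LinearMap.range (p.liftQ (P : E →ₗ[ℝ] E) hkerle) := by
    rw [Submodule.range_liftQ]
  haveI : FiniteDimensional ℝ (LinearMap.range (P : E →ₗ[ℝ] E)) := by
    rw [hrange]; infer_instance
  set W : Submodule ℝ E := N ⊓ LinearMap.range (P : E →ₗ[ℝ] E) with hW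
  haveI : FiniteDimensional ℝ W := Submodule.finiteDimensional_of_le inf_le_right
  have key : (N : Set E) = ⇑P ⁻¹' (W : Set E) := by
    ext x
    constructor
    · intro hx
      refine ⟨?_, ⟨x, rfl⟩⟩
      have h : P x = x - (x - P x) := by abel
      rw [SetLike.mem_coe, h]
      exact N.sub_mem hx (hpN (hsub x))
    · intro hx
      have h1 : P x ∈ N := hx.1
      have h : x = (x - P x) + P x := by abel
      rw [SetLike.mem_coe, h]
      exact N.add_mem (hpN (hsub x)) h1
  rw [key]
  exact (W.closed_of_finiteDimensional).preimage P.continuous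

/-- A submodule containing a submodule of finite codimension has finite codimension. -/
lemma aux_quot_fd {E : Type*} [AddCommGroup E] [Module ℝ E]
    {p N : Submodule ℝ E} (hpN : p ≤ N)
    [FiniteDimensional ℝ (E ⧸ p)] : FiniteDimensional ℝ (E ⧸ N) := by
  have hle : p ≤ LinearMap.ker N.mkQ := by rw [Submodule.ker_mkQ]; exact hpN
  refine Module.Finite.of_surjective (p.liftQ N.mkQ hle) ?_
  intro x
  obtain ⟨y, rfl⟩ := N.mkQ_surjective x
  exact ⟨Submodule.Quotient.mk y, by rw [Submodule.liftQ_apply]⟩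

set_option maxHeartbeats 1000000 in
/-- Let `Z`, `Y` be real Hilbert spaces, `B : Z → Y` a Fredholm
bounded linear operator (finite-dimensional kernel, closed range of finite
codimension), `Q : Z → Z` bounded self-adjoint with `⟪Qz, z⟫ ≥ α‖z‖²` on `ker B`
for some `α > 0`.  Then the bounded linear operator `A(z, y) = (Qz + B†y, Bz)` on
`Z × Y` is Fredholm: its kernel is finite-dimensional and its range is closed
with finite codimension. -/
theorem stmt1
    {Z Y : Type*} [NormedAddCommGroup Z] [InnerProductSpace ℝ Z] [CompleteSpace Z]
    [NormedAddCommGroup Y] [InnerProductSpace ℝ Y] [CompleteSpace Y]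
    (B : Z →L[ℝ] Y)
    (hBker : FiniteDimensional ℝ (LinearMap.ker (B : Z →ₗ[ℝ] Y)))
    (hBrange : IsClosed (LinearMap.range (B : Z →ₗ[ℝ] Y) : Set Y))
    (hBcodim : FiniteDimensional ℝ (Y ⧸ LinearMap.range (B : Z →ₗ[ℝ] Y)))
    (Q : Z →L[ℝ] Z)
    (hQsym : ∀ z₁ z₂ : Z, (inner ℝ (Q z₁) z₂ : ℝ) = inner ℝ (Q z₂) z₁)
    (α : ℝ) (hα : 0 < α)
    (hQcoer : ∀ z ∈ LinearMap.ker (B : Z →ₗ[ℝ] Y), α * ‖z‖ ^ 2 ≤ (inner ℝ (Q z) z : ℝ))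
    (A : (Z × Y) →L[ℝ] (Z × Y))
    (hA : ∀ zy : Z × Y, A zy = (Q zy.1 + (ContinuousLinearMap.adjoint B) zy.2, B zy.1)) :
    FiniteDimensional ℝ (LinearMap.ker (A : (Z × Y) →ₗ[ℝ] (Z × Y))) ∧
      IsClosed (LinearMap.range (A : (Z × Y) →ₗ[ℝ] (Z × Y)) : Set (Z × Y)) ∧
      FiniteDimensional ℝ ((Z × Y) ⧸ LinearMap.range (A : (Z × Y) →ₗ[ℝ] (Z × Y))) := by
  classical
  set K := LinearMap.ker (B : Z →ₗ[ℝ] Y) with hKdef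
  set R := LinearMap.range (B : Z →ₗ[ℝ] Y) with hRdef
  haveI : FiniteDimensional ℝ K := hBker
  haveI : CompleteSpace K := FiniteDimensional.complete ℝ K
  haveI : CompleteSpace R := hBrange.completeSpace_coe
  haveI : CompleteSpace ↥Kᗮ := (Submodule.isClosed_orthogonal K).completeSpace_coe
  -- orthogonal complement of the range is finite-dimensional
  have hcompl : IsCompl R Rᗮ := Submodule.isCompl_orthogonal_of_hasOrthogonalProjection
  haveI hRperp : FiniteDimensional ℝ ↥Rᗮ :=
    (Submodule.quotientEquivOfIsCompl R Rᗮ hcompl).finiteDimensional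
  -- Part 1 : the kernel of A is finite dimensional
  have hkerA : LinearMap.ker (A : (Z × Y) →ₗ[ℝ] (Z × Y)) ≤ (⊥ : Submodule ℝ Z).prod Rᗮ := by
    rintro ⟨z, y⟩ hzy
    have h0 : A (z, y) = 0 := hzy
    rw [hA] at h0
    have h1 : Q z + ContinuousLinearMap.adjoint B y = 0 := congrArg Prod.fst h0
    have h2 : B z = 0 := congrArg Prod.snd h0
    have hz0 : z = 0 := by
      have e1 : (inner ℝ (Q z + ContinuousLinearMap.adjoint B y) z : ℝ) = 0 := by
        rw [h1, inner_zero_left]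
      rw [inner_add_left] at e1
      have e2 : (inner ℝ (ContinuousLinearMap.adjoint B y) z : ℝ) = inner ℝ y (B z) :=
        ContinuousLinearMap.adjoint_inner_left B z y
      rw [e2, h2, inner_zero_right] at e1
      have e3 : (inner ℝ (Q z) z : ℝ) = 0 := by linarith
      have e4 := hQcoer z h2
      rw [e3] at e4
      have h5' : ‖z‖ ^ 2 ≤ 0 := by
        by_contra h
        push_neg at h
        exact (mul_pos hα h).not_ge e4
      have h5 : ‖z‖ ^ 2 = 0 := le_antisymm h5' (sq_nonneg _)
      have h6 : ‖z‖ = 0 := (pow_eq_zero_iff (two_ne_zero)).mp h5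
      exact norm_eq_zero.mp h6
    refine Submodule.mem_prod.mpr ⟨by simp [hz0], ?_⟩
    intro u hu
    obtain ⟨x, rfl⟩ := hu
    have h3 : ContinuousLinearMap.adjoint B y = 0 := by
      rw [hz0] at h1; simpa using h1
    have := ContinuousLinearMap.adjoint_inner_left B x y
    rw [h3, inner_zero_left] at this
    rw [real_inner_comm]
    exact this.symm
  have part1 : FiniteDimensional ℝ (LinearMap.ker (A : (Z × Y) →ₗ[ℝ] (Z × Y))) := by
    have hmap : ∀ x : ↥(LinearMap.ker (A : (Z × Y) →ₗ[ℝ] (Z × Y))), (x : Z × Y).2 ∈ Rᗮ :=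
      fun x => (Submodule.mem_prod.mp (hkerA x.2)).2
    set L : ↥(LinearMap.ker (A : (Z × Y) →ₗ[ℝ] (Z × Y))) →ₗ[ℝ] ↥Rᗮ :=
      LinearMap.codRestrict Rᗮ ((LinearMap.snd ℝ Z Y).comp (LinearMap.ker (A : (Z × Y) →ₗ[ℝ] (Z × Y))).subtype) hmap
      with hLdef
    refine FiniteDimensional.of_injective L ?_
    intro a b hab
    have h2 : (a : Z × Y).2 = (b : Z × Y).2 := congrArg Subtype.val hab
    have ha1 : (a : Z × Y).1 = 0 := (Submodule.mem_bot ℝ).mp (Submodule.mem_prod.mp (hkerA a.2)).1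
    have hb1 : (b : Z × Y).1 = 0 := (Submodule.mem_bot ℝ).mp (Submodule.mem_prod.mp (hkerA b.2)).1
    apply Subtype.ext
    exact Prod.ext (by rw [ha1, hb1]) h2
  -- the pseudo-inverse S of B
  set B₂ : ↥Kᗮ →L[ℝ] ↥R :=
    (B.comp Kᗮ.subtypeL).codRestrict R (fun x => ⟨x.val, rfl⟩) with hB₂def
  have hB₂val : ∀ x : ↥Kᗮ, (B₂ x : Y) = B x.val := fun x => rfl
  have hinj : LinearMap.ker (B₂ : ↥Kᗮ →ₗ[ℝ] ↥R) = ⊥ := by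
    rw [LinearMap.ker_eq_bot']
    intro x hx
    have hBx : B x.val = 0 := by
      have := congrArg (Subtype.val) hx
      simpa [hB₂val] using this
    have hmem : x.val ∈ K := hBx
    have := x.2 x.val hmem
    have hx0 : x.val = 0 := by
      rwa [inner_self_eq_zero] at this
    exact Subtype.ext hx0
  have hsurj : LinearMap.range (B₂ : ↥Kᗮ →ₗ[ℝ] ↥R) = ⊤ := by
    rw [LinearMap.range_eq_top]
    rintro ⟨y, hy⟩
    obtain ⟨z, rfl⟩ := hy
    refine ⟨⟨z - orthogonalProjection K z, show z - (orthogonalProjection K z : Z) ∈ Kᗮ from sub_starProjection_mem_orthogonal (K := K) z⟩, ?_⟩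
    apply Subtype.ext
    change ((B₂ _ : ↥R) : Y) = _
    rw [hB₂val]
    have hk : B (K.starProjection z) = 0 := (orthogonalProjection K z).2
    simp [map_sub, hk]
  set e : ↥Kᗮ ≃L[ℝ] ↥R := ContinuousLinearEquiv.ofBijective B₂ hinj hsurj with hedef
  have he : ∀ x : ↥Kᗮ, (e x : Y) = B x.val := by
    intro x
    have h := congrFun (ContinuousLinearEquiv.coeFn_ofBijective B₂ hinj hsurj) x
    rw [hedef]
    rw [show (ContinuousLinearEquiv.ofBijective B₂ hinj hsurj) x = B₂ x from h]
    exact hB₂val x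
  set S : Y →L[ℝ] Z :=
    Kᗮ.subtypeL.comp (((e.symm : ↥R →L[ℝ] ↥Kᗮ)).comp (orthogonalProjection R)) with hSdef
  have hSval : ∀ y : Y, S y = ((e.symm (orthogonalProjection R y)) : Z) := fun y => rfl
  have hSB : S.comp B = Kᗮ.subtypeL.comp (orthogonalProjection Kᗮ) := by
    ext z
    have h1 : orthogonalProjection R (B z) = ⟨B z, ⟨z, rfl⟩⟩ :=
      Subtype.ext ((starProjection_eq_self_iff (K := R)).mpr ⟨z, rfl⟩)
    have h2 : e (orthogonalProjection Kᗮ z) = ⟨B z, ⟨z, rfl⟩⟩ := by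
      apply Subtype.ext
      rw [he]
      rw [show ((orthogonalProjection Kᗮ z : Z)) = z - (orthogonalProjection K z : Z) from starProjection_orthogonal_val (K := K) z]
      have hk : B (K.starProjection z) = 0 := (orthogonalProjection K z).2
      simp [map_sub, hk]
    show S (B z) = ((orthogonalProjection Kᗮ z : ↥Kᗮ) : Z)
    rw [hSval, h1, ← h2, e.symm_apply_apply]
  have hadj : ∀ w ∈ Kᗮ, ContinuousLinearMap.adjoint B (ContinuousLinearMap.adjoint S w) = w := by
    intro w hw
    have h1 : ContinuousLinearMap.adjoint B ∘L ContinuousLinearMap.adjoint S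
        = ContinuousLinearMap.adjoint (S ∘L B) :=
      (ContinuousLinearMap.adjoint_comp S B).symm
    have h2 : ContinuousLinearMap.adjoint (S ∘L B)
        = Kᗮ.subtypeL ∘L orthogonalProjection Kᗮ := by
      rw [hSB]
      have h3 := isSelfAdjoint_starProjection Kᗮ
      rw [ContinuousLinearMap.isSelfAdjoint_iff'] at h3
      exact h3
    have h4 : (ContinuousLinearMap.adjoint B ∘L ContinuousLinearMap.adjoint S) w = w := by
      rw [h1, h2]
      show ((orthogonalProjection Kᗮ w : ↥Kᗮ) : Z) = w
      exact (starProjection_eq_self_iff (K := Kᗮ)).mpr hw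
    exact h4
  -- the reduced operator on K
  set G : ↥K →ₗ[ℝ] ↥K :=
    (((orthogonalProjection K).comp (Q.comp K.subtypeL)) : ↥K →ₗ[ℝ] ↥K) with hGdef
  have hGval : ∀ k : ↥K, G k = orthogonalProjection K (Q k.val) := fun k => rfl
  have hGinj : Function.Injective G := by
    rw [← LinearMap.ker_eq_bot, LinearMap.ker_eq_bot']
    intro k hk
    have h0 : orthogonalProjection K (Q k.val) = 0 := by rw [← hGval]; exact hk
    have horth : inner ℝ (Q k.val - (orthogonalProjection K (Q k.val) : Z)) k.val = 0 :=
      starProjection_inner_eq_zero (K := K) (Q k.val) k.val k.2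
    rw [h0] at horth
    simp only [Submodule.coe_zero, sub_zero] at horth
    have e4 := hQcoer k.val k.2
    rw [horth] at e4
    have hk0 : k.val = 0 := by
      have h5' : ‖(k : Z)‖ ^ 2 ≤ 0 := by
        by_contra h
        push_neg at h
        exact (mul_pos hα h).not_ge e4
      have h5 : ‖(k : Z)‖ ^ 2 = 0 := le_antisymm h5' (sq_nonneg _)
      have h6 : ‖k.val‖ = 0 := (pow_eq_zero_iff (two_ne_zero)).mp h5
      exact norm_eq_zero.mp h6
    exact Subtype.ext hk0
  have hGsurj : Function.Surjective G := LinearMap.injective_iff_surjective.mp hGinj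
  -- Part 2 : the range of A contains ⊤ × R
  set V : Submodule ℝ (Z × Y) := (⊤ : Submodule ℝ Z).prod R with hVdef
  have hVle : V ≤ LinearMap.range (A : (Z × Y) →ₗ[ℝ] (Z × Y)) := by
    rintro ⟨f, g⟩ hfg
    have hg : g ∈ R := (Submodule.mem_prod.mp hfg).2
    set z₁ : Z := S g with hz₁def
    have hz₁mem : z₁ ∈ Kᗮ := by rw [hz₁def, hSval]; exact Submodule.coe_mem _
    have hBz₁ : B z₁ = g := by
      have h1 : orthogonalProjection R g = ⟨g, hg⟩ :=
        Subtype.ext ((starProjection_eq_self_iff (K := R)).mpr hg)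
      rw [hz₁def, hSval, h1]
      have := congrArg Subtype.val (e.apply_symm_apply (⟨g, hg⟩ : ↥R))
      rw [he] at this
      exact this
    obtain ⟨k, hk⟩ := hGsurj (orthogonalProjection K (f - Q z₁))
    set z : Z := ↑k + z₁ with hzdef
    have hBz : B z = g := by
      have hbk : B (k : Z) = 0 := k.2
      rw [hzdef, map_add, hbk, hBz₁, zero_add]
    have hfQz : f - Q z ∈ Kᗮ := by
      have hp0 : orthogonalProjection K (f - Q z) = 0 := by
        have hsplit : f - Q z = (f - Q z₁) - Q (k : Z) := by
          rw [hzdef, map_add]; abel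
        rw [hsplit, map_sub, ← hGval, hk, sub_self]
      have h5 : f - Q z - (orthogonalProjection K (f - Q z) : Z) ∈ Kᗮ :=
        sub_starProjection_mem_orthogonal (K := K) (f - Q z)
      rw [hp0] at h5
      simpa using h5
    refine ⟨(z, ContinuousLinearMap.adjoint S (f - Q z)), ?_⟩
    rw [ContinuousLinearMap.coe_coe, hA]
    have hBy : ContinuousLinearMap.adjoint B (ContinuousLinearMap.adjoint S (f - Q z))
        = f - Q z := hadj _ hfQz
    show (Q z + ContinuousLinearMap.adjoint B (ContinuousLinearMap.adjoint S (f - Q z)), B z)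
        = (f, g)
    rw [hBy, hBz]
    congr 1
    abel
  -- V is closed with finite codimension
  have hVclosed : IsClosed (V : Set (Z × Y)) := by
    have h : (V : Set (Z × Y)) = (Set.univ : Set Z) ×ˢ (R : Set Y) := by
      rw [hVdef]
      ext x
      simp [Submodule.mem_prod, Set.mem_prod]
    rw [h]
    exact isClosed_univ.prod hBrange
  haveI hVq : FiniteDimensional ℝ ((Z × Y) ⧸ V) := by
    set φ : Y →ₗ[ℝ] (Z × Y) ⧸ V := V.mkQ.comp (LinearMap.inr ℝ Z Y) with hφdef
    have hφker : R ≤ LinearMap.ker φ := by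
      intro y hy
      have : ((0 : Z), y) ∈ V := Submodule.mem_prod.mpr ⟨Submodule.mem_top, hy⟩
      simp only [hφdef, LinearMap.mem_ker, LinearMap.comp_apply, LinearMap.inr_apply]
      rw [Submodule.mkQ_apply, Submodule.Quotient.mk_eq_zero]
      exact this
    refine Module.Finite.of_surjective (R.liftQ φ hφker) ?_
    intro x
    obtain ⟨⟨z, y⟩, rfl⟩ := V.mkQ_surjective x
    refine ⟨Submodule.Quotient.mk y, ?_⟩
    rw [Submodule.liftQ_apply]
    simp only [hφdef, LinearMap.comp_apply, LinearMap.inr_apply]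
    rw [Submodule.mkQ_apply, Submodule.mkQ_apply, Submodule.Quotient.eq]
    refine Submodule.mem_prod.mpr ⟨Submodule.mem_top, ?_⟩
    simp
  have part2 : IsClosed (LinearMap.range (A : (Z × Y) →ₗ[ℝ] (Z × Y)) : Set (Z × Y)) :=
    aux_closed_of_le hVle hVclosed
  have part3 : FiniteDimensional ℝ ((Z × Y) ⧸ LinearMap.range (A : (Z × Y) →ₗ[ℝ] (Z × Y))) :=
    aux_quot_fd hVle
  exact ⟨part1, part2, part3⟩
end

section
/- Let Z and Y be real Hilbert spaces, B : Z → Y a Fredholm bounded linear operator, and Q : Z → Z a bounded self-adjoint linear operator such that ⟪Qz, z⟫ ≥ α‖z‖² for all z ∈ ker B, for some α > 0. Then the operator A : Z × Y → Z × Y, A(z, y) = (Qz + B†y, Bz), satisfies ker A = {0} × ker B† and range A = Z × range B. -/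
open ContinuousLinearMap in
/-- Closed range theorem (one direction): if `B` has closed range and complete kernel,
then every element of `(ker B)ᗮ` is in the range of the adjoint. -/
lemma adjoint_surj_of_closed_range
    {Z Y : Type*} [NormedAddCommGroup Z] [InnerProductSpace ℝ Z] [CompleteSpace Z]
    [NormedAddCommGroup Y] [InnerProductSpace ℝ Y] [CompleteSpace Y]
    (B : Z →L[ℝ] Y) [CompleteSpace (LinearMap.ker (B : Z →ₗ[ℝ] Y))]
    (hBrange : IsClosed (LinearMap.range (B : Z →ₗ[ℝ] Y) : Set Y))
    (u : Z) (hu : u ∈ (LinearMap.ker (B : Z →ₗ[ℝ] Y))ᗮ) :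
    ∃ y : Y, ContinuousLinearMap.adjoint B y = u := by
  set K := LinearMap.ker (B : Z →ₗ[ℝ] Y) with hK
  haveI : CompleteSpace (LinearMap.range (B : Z →ₗ[ℝ] Y)) := hBrange.completeSpace_coe
  set f : (Kᗮ : Submodule ℝ Z) →L[ℝ] (LinearMap.range (B : Z →ₗ[ℝ] Y)) :=
    (B.comp (Kᗮ).subtypeL).codRestrict _ (fun x => LinearMap.mem_range_self _ _) with hf
  have hfapply : ∀ x : Kᗮ, (f x : Y) = B (x : Z) := fun x => rfl
  have hinj : LinearMap.ker (f : Kᗮ →ₗ[ℝ] LinearMap.range (B : Z →ₗ[ℝ] Y)) = ⊥ := by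
    rw [Submodule.eq_bot_iff]
    rintro x hx
    rw [LinearMap.mem_ker] at hx
    have hBx : (x : Z) ∈ K :=
      LinearMap.mem_ker.mpr (by simpa [hfapply] using congrArg (Subtype.val) hx)
    have h0 : (inner ℝ (x : Z) (x : Z) : ℝ) = 0 :=
      (Submodule.mem_orthogonal K (x : Z)).mp x.2 _ hBx
    have : (x : Z) = 0 := inner_self_eq_zero.mp h0
    exact Subtype.ext this
  have hsurj : LinearMap.range (f : Kᗮ →ₗ[ℝ] LinearMap.range (B : Z →ₗ[ℝ] Y)) = ⊤ := by
    rw [LinearMap.range_eq_top]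
    rintro ⟨b, z, rfl⟩
    refine ⟨⟨z - Submodule.orthogonalProjectionOnto K z, Submodule.sub_starProjection_mem_orthogonal z⟩, ?_⟩
    apply Subtype.ext
    have hPz : B ((Submodule.orthogonalProjectionOnto K z : Z)) = 0 := (Submodule.orthogonalProjectionOnto K z).2
    simp [hfapply, map_sub, hPz, -Submodule.coe_orthogonalProjectionOnto_apply]
  set e := ContinuousLinearEquiv.ofBijective f hinj hsurj with he
  set φ : Y →L[ℝ] ℝ :=
    (innerSL ℝ u).comp ((Kᗮ).subtypeL.comp
      ((e.symm : (LinearMap.range (B : Z →ₗ[ℝ] Y)) →L[ℝ] (Kᗮ : Submodule ℝ Z)).comp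
        (Submodule.orthogonalProjectionOnto (LinearMap.range (B : Z →ₗ[ℝ] Y))))) with hφ
  refine ⟨(InnerProductSpace.toDual ℝ Y).symm φ, ?_⟩
  apply ext_inner_right ℝ
  intro z
  rw [ContinuousLinearMap.adjoint_inner_left, InnerProductSpace.toDual_symm_apply]
  have hmemBz : B z ∈ LinearMap.range (B : Z →ₗ[ℝ] Y) := LinearMap.mem_range_self _ _
  have hproj : Submodule.orthogonalProjectionOnto (LinearMap.range (B : Z →ₗ[ℝ] Y)) (B z) = ⟨B z, hmemBz⟩ :=
    Submodule.orthogonalProjectionOnto_mem_subspace_eq_self (⟨B z, hmemBz⟩ : LinearMap.range (B : Z →ₗ[ℝ] Y))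
  have hsymm : e.symm ⟨B z, hmemBz⟩ =
      ⟨z - Submodule.orthogonalProjectionOnto K z, Submodule.sub_starProjection_mem_orthogonal z⟩ := by
    rw [ContinuousLinearEquiv.symm_apply_eq]
    have : e ⟨z - Submodule.orthogonalProjectionOnto K z, Submodule.sub_starProjection_mem_orthogonal z⟩ =
        f ⟨z - Submodule.orthogonalProjectionOnto K z, Submodule.sub_starProjection_mem_orthogonal z⟩ := by
      rw [he, ContinuousLinearEquiv.coeFn_ofBijective]
    rw [this]
    apply Subtype.ext
    have hPz : B ((Submodule.orthogonalProjectionOnto K z : Z)) = 0 := (Submodule.orthogonalProjectionOnto K z).2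
    simp [hfapply, map_sub, hPz, -Submodule.coe_orthogonalProjectionOnto_apply]
  have huP : (inner ℝ u ((Submodule.orthogonalProjectionOnto K z : Z)) : ℝ) = 0 := by
    rw [real_inner_comm]
    exact (Submodule.mem_orthogonal K u).mp hu _ (Submodule.orthogonalProjectionOnto K z).2
  rw [hφ]
  simp only [ContinuousLinearMap.comp_apply, hproj, ContinuousLinearEquiv.coe_coe, hsymm,
    Submodule.subtypeL_apply, innerSL_apply_apply]
  rw [inner_sub_right, huP, sub_zero]

set_option maxHeartbeats 1000000 in
/-- In the setting of Statement 1 (real Hilbert spaces `Z`, `Y`,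
`B : Z → Y` Fredholm, `Q : Z → Z` bounded self-adjoint and coercive on `ker B`),
the operator `A(z, y) = (Qz + B†y, Bz)` satisfies
`ker A = {0} × ker B†` and `range A = Z × range B`. -/
theorem stmt2
    {Z Y : Type*} [NormedAddCommGroup Z] [InnerProductSpace ℝ Z] [CompleteSpace Z]
    [NormedAddCommGroup Y] [InnerProductSpace ℝ Y] [CompleteSpace Y]
    (B : Z →L[ℝ] Y)
    (hBker : FiniteDimensional ℝ (LinearMap.ker (B : Z →ₗ[ℝ] Y)))
    (hBrange : IsClosed (LinearMap.range (B : Z →ₗ[ℝ] Y) : Set Y))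
    (hBcodim : FiniteDimensional ℝ (Y ⧸ LinearMap.range (B : Z →ₗ[ℝ] Y)))
    (Q : Z →L[ℝ] Z)
    (hQsym : ∀ z₁ z₂ : Z, (inner ℝ (Q z₁) z₂ : ℝ) = inner ℝ (Q z₂) z₁)
    (α : ℝ) (hα : 0 < α)
    (hQcoer : ∀ z ∈ LinearMap.ker (B : Z →ₗ[ℝ] Y), α * ‖z‖ ^ 2 ≤ (inner ℝ (Q z) z : ℝ))
    (A : (Z × Y) →L[ℝ] (Z × Y))
    (hA : ∀ zy : Z × Y, A zy = (Q zy.1 + (ContinuousLinearMap.adjoint B) zy.2, B zy.1)) :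
    LinearMap.ker (A : (Z × Y) →ₗ[ℝ] (Z × Y)) =
        Submodule.prod (⊥ : Submodule ℝ Z)
          (LinearMap.ker (ContinuousLinearMap.adjoint B : Y →ₗ[ℝ] Z)) ∧
      LinearMap.range (A : (Z × Y) →ₗ[ℝ] (Z × Y)) =
        Submodule.prod (⊤ : Submodule ℝ Z) (LinearMap.range (B : Z →ₗ[ℝ] Y)) := by
  set K := LinearMap.ker (B : Z →ₗ[ℝ] Y) with hK
  haveI : CompleteSpace K := FiniteDimensional.complete ℝ K
  constructor
  · -- kernel
    ext zy
    obtain ⟨z, y⟩ := zy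
    simp only [LinearMap.mem_ker, Submodule.mem_prod, Submodule.mem_bot, ContinuousLinearMap.coe_coe]
    constructor
    · intro h
      rw [hA] at h
      have h1 : Q z + (ContinuousLinearMap.adjoint B) y = 0 := congrArg Prod.fst h
      have h2 : B z = 0 := congrArg Prod.snd h
      have hinner : (inner ℝ (Q z) z : ℝ) = 0 := by
        have hBy : (inner ℝ ((ContinuousLinearMap.adjoint B) y) z : ℝ) = 0 := by
          rw [ContinuousLinearMap.adjoint_inner_left, h2, inner_zero_right]
        have := congrArg (fun w => (inner ℝ w z : ℝ)) h1
        simpa [inner_add_left, hBy] using this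
      have hz : z = 0 := by
        have hc := hQcoer z (by rw [LinearMap.mem_ker]; exact h2)
        rw [hinner] at hc
        have : ‖z‖ ^ 2 ≤ 0 := by nlinarith
        have : ‖z‖ = 0 := by nlinarith [sq_nonneg ‖z‖, norm_nonneg z]
        exact norm_eq_zero.mp this
      subst hz
      refine ⟨rfl, ?_⟩
      simpa using h1
    · rintro ⟨hz, hy⟩
      subst hz
      rw [hA]
      simp [hy]
  · -- range
    ext wv
    obtain ⟨w, v⟩ := wv
    simp only [LinearMap.mem_range, Submodule.mem_prod, Submodule.mem_top, true_and,
      ContinuousLinearMap.coe_coe]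
    constructor
    · rintro ⟨⟨z, y⟩, h⟩
      rw [hA] at h
      exact ⟨z, congrArg Prod.snd h⟩
    · intro hv
      obtain ⟨z₀, hz₀⟩ := hv
      -- T : K →L K, k ↦ P (Q k)
      set T : K →ₗ[ℝ] K :=
        ((Submodule.orthogonalProjectionOnto K : Z →L[ℝ] K) : Z →ₗ[ℝ] K) ∘ₗ
          ((Q : Z →ₗ[ℝ] Z) ∘ₗ K.subtype) with hT
      have hTinj : Function.Injective T := by
        intro k₁ k₂ hk
        have hk' : T (k₁ - k₂) = 0 := by rw [map_sub, hk, sub_self]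
        set k := k₁ - k₂ with hkdef
        have hk'' : Submodule.orthogonalProjectionOnto K (Q (k : Z)) = 0 := hk'
        have hQk : Q (k : Z) ∈ Kᗮ := Submodule.orthogonalProjectionOnto_eq_zero_iff.mp hk''
        have hinner : (inner ℝ (Q (k : Z)) (k : Z) : ℝ) = 0 := by
          rw [real_inner_comm]
          exact (Submodule.mem_orthogonal K (Q (k:Z))).mp hQk _ k.2
        have hc := hQcoer (k : Z) k.2
        rw [hinner] at hc
        have hsq : ‖(k : Z)‖ ^ 2 = 0 := le_antisymm (by nlinarith) (sq_nonneg _)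
        have hk0 : (k : Z) = 0 := norm_eq_zero.mp (sq_eq_zero_iff.mp hsq)
        have : k = 0 := Subtype.ext hk0
        rw [hkdef] at this
        exact sub_eq_zero.mp this
      haveI := hBker
      have hTsurj : Function.Surjective T :=
        LinearMap.injective_iff_surjective.mp hTinj
      obtain ⟨k, hk⟩ := hTsurj (Submodule.orthogonalProjectionOnto K (w - Q z₀))
      have hmem : w - Q z₀ - Q (k : Z) ∈ Kᗮ := by
        rw [← Submodule.orthogonalProjectionOnto_eq_zero_iff]
        have h1 : Submodule.orthogonalProjectionOnto K (Q (k : Z)) = Submodule.orthogonalProjectionOnto K (w - Q z₀) := hk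
        rw [map_sub, h1, sub_self]
      obtain ⟨y, hy⟩ := adjoint_surj_of_closed_range B hBrange _ hmem
      refine ⟨(z₀ + (k : Z), y), ?_⟩
      rw [hA]
      have hBk : B (k : Z) = 0 := k.2
      have hfst : Q (z₀ + (k : Z)) + (ContinuousLinearMap.adjoint B) y = w := by
        rw [hy, map_add]; abel
      have hsnd : B (z₀ + (k : Z)) = v := by rw [map_add, hBk, add_zero, hz₀]
      exact Prod.ext hfst hsnd
end

section
/- Let Z and Y be real Hilbert spaces, B : Z → Y a Fredholm bounded linear operator, and Q : Z → Z a bounded self-adjoint linear operator such that ⟪Qz, z⟫ ≥ α‖z‖² for all z ∈ ker B, for some α > 0. Then for every ε > 0 there exist δ > 0 and σ > 0 such that for all bounded linear operators B̃ : Z → Y with ‖B̃ − B‖ < δ, all bounded linear operators Q̃ : Z → Z with ‖Q̃ − Q‖ < δ, and all 0 < ρ ≤ σ, one has ⟪(Q̃ + ρ⁻¹ B̃† B̃) z, z⟫ ≥ (α − ε)‖z‖² for all z ∈ Z. -/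
set_option maxHeartbeats 4000000


/-- perturbed coercivity, Lemma `Lem:CoerciveRetten`.
Let `Z`, `Y` be real Hilbert spaces, `B : Z → Y` Fredholm, `Q : Z → Z` bounded
self-adjoint with `⟪Qz, z⟫ ≥ α‖z‖²` on `ker B` for some `α > 0`.  Then for every
`ε > 0` there exist `δ > 0` and `σ > 0` such that for all `B̃` with `‖B̃ − B‖ < δ`,
all `Q̃` with `‖Q̃ − Q‖ < δ` and all `0 < ρ ≤ σ`,
`⟪(Q̃ + ρ⁻¹ B̃† B̃) z, z⟫ ≥ (α − ε) ‖z‖²` for all `z ∈ Z`. -/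
theorem stmt3
    {Z Y : Type*} [NormedAddCommGroup Z] [InnerProductSpace ℝ Z] [CompleteSpace Z]
    [NormedAddCommGroup Y] [InnerProductSpace ℝ Y] [CompleteSpace Y]
    (B : Z →L[ℝ] Y)
    (hBker : FiniteDimensional ℝ (LinearMap.ker (B : Z →ₗ[ℝ] Y)))
    (hBrange : IsClosed (LinearMap.range (B : Z →ₗ[ℝ] Y) : Set Y))
    (hBcodim : FiniteDimensional ℝ (Y ⧸ LinearMap.range (B : Z →ₗ[ℝ] Y)))
    (Q : Z →L[ℝ] Z)
    (hQsym : ∀ z₁ z₂ : Z, (inner ℝ (Q z₁) z₂ : ℝ) = inner ℝ (Q z₂) z₁)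
    (α : ℝ) (hα : 0 < α)
    (hQcoer : ∀ z ∈ LinearMap.ker (B : Z →ₗ[ℝ] Y), α * ‖z‖ ^ 2 ≤ (inner ℝ (Q z) z : ℝ)) :
    ∀ ε > (0 : ℝ), ∃ δ > (0 : ℝ), ∃ σ > (0 : ℝ),
      ∀ (B' : Z →L[ℝ] Y) (Q' : Z →L[ℝ] Z) (ρ : ℝ),
        ‖B' - B‖ < δ → ‖Q' - Q‖ < δ → 0 < ρ → ρ ≤ σ →
        ∀ z : Z, (α - ε) * ‖z‖ ^ 2 ≤
          (inner ℝ (Q' z + ρ⁻¹ • (ContinuousLinearMap.adjoint B') (B' z)) z : ℝ) := by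
  classical
  -- Step 1: B is bounded below on (ker B)ᗮ
  set K := LinearMap.ker (B : Z →ₗ[ℝ] Y) with hK
  obtain ⟨c, hc, hcB⟩ : ∃ c > (0:ℝ), ∀ w ∈ Kᗮ, c * ‖w‖ ≤ ‖B w‖ := by
    haveI : CompleteSpace (LinearMap.range (B : Z →ₗ[ℝ] Y)) := hBrange.completeSpace_coe
    haveI : CompleteSpace (Kᗮ : Submodule ℝ Z) := K.isClosed_orthogonal.completeSpace_coe
    set T : (Kᗮ : Submodule ℝ Z) →L[ℝ] LinearMap.range (B : Z →ₗ[ℝ] Y) :=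
      (B.comp (Kᗮ.subtypeL)).codRestrict (LinearMap.range (B : Z →ₗ[ℝ] Y))
        (fun w => LinearMap.mem_range_self _ _) with hT
    have hTapp : ∀ w : Kᗮ, (T w : Y) = B (w : Z) := fun w => rfl
    have hinj : LinearMap.ker (T : (Kᗮ : Submodule ℝ Z) →ₗ[ℝ] LinearMap.range (B : Z →ₗ[ℝ] Y)) = ⊥ := by
      rw [LinearMap.ker_eq_bot']
      intro w hw
      have hBw : B (w : Z) = 0 := by
        have := congrArg (Subtype.val) hw
        simpa [hTapp] using this
      have hwK : (w : Z) ∈ K := by simpa [hK, LinearMap.mem_ker] using hBw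
      have h0 : (inner ℝ ((w : Z)) ((w : Z)) : ℝ) = 0 := w.2 _ hwK
      have : (w : Z) = 0 := by simpa using inner_self_eq_zero.mp h0
      exact Subtype.ext this
    have hsurj : LinearMap.range (T : (Kᗮ : Submodule ℝ Z) →ₗ[ℝ] LinearMap.range (B : Z →ₗ[ℝ] Y)) = ⊤ := by
      rw [LinearMap.range_eq_top]
      rintro ⟨y, z, rfl⟩
      refine ⟨⟨z - K.orthogonalProjection z, K.sub_starProjection_mem_orthogonal z⟩, ?_⟩
      apply Subtype.ext
      have hu : (K.orthogonalProjection z : Z) ∈ K := (K.orthogonalProjection z).2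
      have : B ((K.orthogonalProjection z : Z)) = 0 := hu
      simp only [ContinuousLinearMap.coe_coe, hTapp, map_sub, this, sub_zero]
    set e := ContinuousLinearEquiv.ofBijective T hinj hsurj with he
    set C := ‖(e.symm : LinearMap.range (B : Z →ₗ[ℝ] Y) →L[ℝ] (Kᗮ : Submodule ℝ Z))‖ with hC
    refine ⟨(C + 1)⁻¹, by positivity, ?_⟩
    intro w hw
    have h1 : ‖(⟨w, hw⟩ : Kᗮ)‖ ≤ C * ‖B w‖ := by
      have hle := (e.symm : LinearMap.range (B : Z →ₗ[ℝ] Y) →L[ℝ] (Kᗮ : Submodule ℝ Z)).le_opNorm (e ⟨w, hw⟩)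
      have h2 : e.symm (e ⟨w, hw⟩) = ⟨w, hw⟩ := e.symm_apply_apply _
      have h3 : ‖e ⟨w, hw⟩‖ = ‖B w‖ := by
        have h4 : ((e ⟨w, hw⟩ : LinearMap.range (B : Z →ₗ[ℝ] Y)) : Y) = B w := rfl
        rw [← h4]; rfl
      calc ‖(⟨w, hw⟩ : Kᗮ)‖ = ‖e.symm (e ⟨w, hw⟩)‖ := by rw [h2]
        _ ≤ C * ‖e ⟨w, hw⟩‖ := hle
        _ = C * ‖B w‖ := by rw [h3]
    have hwn : ‖(⟨w, hw⟩ : Kᗮ)‖ = ‖w‖ := rfl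
    rw [hwn] at h1
    have hC0 : 0 ≤ C := norm_nonneg _
    have hB0 : 0 ≤ ‖B w‖ := norm_nonneg _
    rw [inv_mul_le_iff₀ (by positivity)]
    nlinarith
  -- Step 2: choose the constants
  intro ε hε
  set M := ‖Q‖ with hM
  have hM0 : 0 ≤ M := norm_nonneg _
  set η : ℝ := min 1 (ε / (2 * (α + 3 * M + 1))) with hη
  have hηpos : 0 < η := lt_min one_pos (by positivity)
  have hη1 : η ≤ 1 := min_le_left _ _
  have hη2 : (α + 3 * M + 1) * η ≤ ε / 2 := by
    have h : η ≤ ε / (2 * (α + 3 * M + 1)) := min_le_right _ _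
    have hd : (0:ℝ) < α + 3 * M + 1 := by positivity
    rw [← le_div_iff₀' hd, div_div]
    exact h
  set δ : ℝ := min (ε / 2) (min (c * η / 2) 1) with hδ
  have hδpos : 0 < δ := lt_min (by positivity) (lt_min (by positivity) one_pos)
  have hδε : δ ≤ ε / 2 := min_le_left _ _
  have hδc : δ ≤ c * η / 2 := le_trans (min_le_right _ _) (min_le_left _ _)
  have hδ1 : δ ≤ 1 := le_trans (min_le_right _ _) (min_le_right _ _)
  set σ : ℝ := (c * η / 2) ^ 2 / (α + M + 1) with hσ
  have hσpos : 0 < σ := by positivity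
  refine ⟨δ, hδpos, σ, hσpos, ?_⟩
  intro B' Q' ρ hB' hQ' hρ hρσ z
  -- decomposition
  set u : Z := (K.orthogonalProjection z : Z) with hu
  set w : Z := z - u with hw
  have huK : u ∈ K := (K.orthogonalProjection z).2
  have hwK : w ∈ Kᗮ := K.sub_starProjection_mem_orthogonal z
  have hzuw : z = u + w := by rw [hw]; abel
  have hinner_uw : (inner ℝ u w : ℝ) = 0 := hwK u huK
  have hpyth : ‖z‖ ^ 2 = ‖u‖ ^ 2 + ‖w‖ ^ 2 := by
    rw [hzuw, norm_add_sq_real, hinner_uw]; ring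
  set a := ‖z‖ with ha
  set b := ‖w‖ with hb
  have ha0 : 0 ≤ a := norm_nonneg _
  have hb0 : 0 ≤ b := norm_nonneg _
  have hua : ‖u‖ ≤ a := by nlinarith [norm_nonneg u, sq_nonneg b]
  have hba : b ≤ a := by nlinarith [norm_nonneg u]
  -- RHS simplification
  have hRHS : (inner ℝ (Q' z + ρ⁻¹ • (ContinuousLinearMap.adjoint B') (B' z)) z : ℝ)
      = inner ℝ (Q' z) z + ρ⁻¹ * ‖B' z‖ ^ 2 := by
    rw [inner_add_left, real_inner_smul_left, ContinuousLinearMap.adjoint_inner_left,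
      real_inner_self_eq_norm_sq]
  rw [hRHS]
  -- Q' vs Q
  have hQ'Q : (inner ℝ (Q z) z : ℝ) - δ * a ^ 2 ≤ inner ℝ (Q' z) z := by
    have h1 : (inner ℝ (Q' z) z : ℝ) - inner ℝ (Q z) z = inner ℝ ((Q' - Q) z) z := by
      rw [ContinuousLinearMap.sub_apply, inner_sub_left]
    have h2 : |(inner ℝ ((Q' - Q) z) z : ℝ)| ≤ ‖Q' - Q‖ * a * a := by
      calc |(inner ℝ ((Q' - Q) z) z : ℝ)| ≤ ‖(Q' - Q) z‖ * ‖z‖ := abs_real_inner_le_norm _ _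
        _ ≤ ‖Q' - Q‖ * ‖z‖ * ‖z‖ :=
          mul_le_mul_of_nonneg_right ((Q' - Q).le_opNorm z) (norm_nonneg _)
    have h3 : ‖Q' - Q‖ * a * a ≤ δ * a ^ 2 := by nlinarith [norm_nonneg (Q' - Q)]
    have := abs_le.mp h2
    nlinarith
  by_cases hcase : b ≤ η * a
  · -- w small: coercivity of Q dominates
    have hQz : α * ‖u‖ ^ 2 - 2 * (M * a * b) - M * b ^ 2 ≤ (inner ℝ (Q z) z : ℝ) := by
      have hexp : (inner ℝ (Q z) z : ℝ)
          = inner ℝ (Q u) u + inner ℝ (Q u) w + inner ℝ (Q w) u + inner ℝ (Q w) w := by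
        rw [hzuw]
        simp only [map_add, inner_add_left, inner_add_right]
        ring
      have h1 : α * ‖u‖ ^ 2 ≤ (inner ℝ (Q u) u : ℝ) := hQcoer u huK
      have h2 : |(inner ℝ (Q u) w : ℝ)| ≤ M * a * b := by
        calc |(inner ℝ (Q u) w : ℝ)| ≤ ‖Q u‖ * b := abs_real_inner_le_norm _ _
          _ ≤ M * ‖u‖ * b := mul_le_mul_of_nonneg_right (Q.le_opNorm u) hb0
          _ ≤ M * a * b := mul_le_mul_of_nonneg_right (mul_le_mul_of_nonneg_left hua hM0) hb0
      have h3 : |(inner ℝ (Q w) u : ℝ)| ≤ M * a * b := by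
        calc |(inner ℝ (Q w) u : ℝ)| ≤ ‖Q w‖ * ‖u‖ := abs_real_inner_le_norm _ _
          _ ≤ M * b * ‖u‖ := mul_le_mul_of_nonneg_right (Q.le_opNorm w) (norm_nonneg _)
          _ ≤ M * b * a := mul_le_mul_of_nonneg_left hua (by positivity)
          _ = M * a * b := by ring
      have h4 : |(inner ℝ (Q w) w : ℝ)| ≤ M * b ^ 2 := by
        calc |(inner ℝ (Q w) w : ℝ)| ≤ ‖Q w‖ * b := abs_real_inner_le_norm _ _
          _ ≤ M * b * b := mul_le_mul_of_nonneg_right (Q.le_opNorm w) hb0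
          _ = M * b ^ 2 := by ring
      have h2' := abs_le.mp h2
      have h3' := abs_le.mp h3
      have h4' := abs_le.mp h4
      nlinarith
    have hpos : 0 ≤ ρ⁻¹ * ‖B' z‖ ^ 2 := by positivity
    have hkey : (α - ε) * a ^ 2 ≤ (inner ℝ (Q z) z : ℝ) - δ * a ^ 2 := by
      have hu2 : ‖u‖ ^ 2 = a ^ 2 - b ^ 2 := by nlinarith
      rw [hu2] at hQz
      nlinarith [mul_nonneg (sub_nonneg.2 hcase) ha0, mul_nonneg (sub_nonneg.2 hcase) hb0,
        mul_nonneg (mul_nonneg (sub_nonneg.2 hη1) hηpos.le) (sq_nonneg a),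
        mul_nonneg hM0 (mul_nonneg (sub_nonneg.2 hcase) ha0), sq_nonneg a,
        mul_nonneg hα.le (mul_nonneg (sub_nonneg.2 hcase) (mul_nonneg hηpos.le ha0))]
    linarith
  · -- w big: penalty term dominates
    push_neg at hcase
    have hBz : c * η * a ≤ ‖B z‖ := by
      have h1 : B z = B w := by
        rw [hzuw, map_add]
        have : B u = 0 := huK
        rw [this, zero_add]
      rw [h1]
      calc c * η * a ≤ c * b := by nlinarith
        _ ≤ ‖B w‖ := hcB w hwK
    have hB'z : c * η / 2 * a ≤ ‖B' z‖ := by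
      have h1 : ‖B z - B' z‖ ≤ δ * a := by
        have h2 : B z - B' z = (B - B') z := by rw [ContinuousLinearMap.sub_apply]
        rw [h2]
        calc ‖(B - B') z‖ ≤ ‖B - B'‖ * a := (B - B').le_opNorm z
          _ ≤ δ * a := by
            have : ‖B - B'‖ = ‖B' - B‖ := by rw [← norm_neg]; congr 1; abel
            nlinarith [this ▸ hB'.le]
      have h3 : ‖B z‖ - ‖B' z‖ ≤ δ * a := le_trans (norm_sub_norm_le _ _) h1
      nlinarith
    have hsq : (c * η / 2) ^ 2 * a ^ 2 ≤ ‖B' z‖ ^ 2 := by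
      have h0 : 0 ≤ c * η / 2 * a := by positivity
      nlinarith [norm_nonneg (B' z)]
    have hρinv : (α + M + 1) * a ^ 2 ≤ ρ⁻¹ * ‖B' z‖ ^ 2 := by
      have h1 : σ⁻¹ ≤ ρ⁻¹ := by
        apply inv_anti₀ hρ hρσ
      have h2 : σ⁻¹ * ((c * η / 2) ^ 2 * a ^ 2) ≤ ρ⁻¹ * ‖B' z‖ ^ 2 := by
        calc σ⁻¹ * ((c * η / 2) ^ 2 * a ^ 2) ≤ ρ⁻¹ * ((c * η / 2) ^ 2 * a ^ 2) :=
            mul_le_mul_of_nonneg_right h1 (by positivity)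
          _ ≤ ρ⁻¹ * ‖B' z‖ ^ 2 := mul_le_mul_of_nonneg_left hsq (by positivity)
      have h3 : σ⁻¹ * ((c * η / 2) ^ 2 * a ^ 2) = (α + M + 1) * a ^ 2 := by
        rw [hσ]
        field_simp
      rw [h3] at h2
      exact h2
    have hQ'low : -(M + 1) * a ^ 2 ≤ (inner ℝ (Q' z) z : ℝ) := by
      have h1 : |(inner ℝ (Q' z) z : ℝ)| ≤ ‖Q'‖ * a * a := by
        calc |(inner ℝ (Q' z) z : ℝ)| ≤ ‖Q' z‖ * a := abs_real_inner_le_norm _ _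
          _ ≤ ‖Q'‖ * a * a := mul_le_mul_of_nonneg_right (Q'.le_opNorm z) ha0
      have h2 : ‖Q'‖ ≤ M + 1 := by
        calc ‖Q'‖ = ‖Q + (Q' - Q)‖ := by congr 1; abel
          _ ≤ M + ‖Q' - Q‖ := norm_add_le _ _
          _ ≤ M + 1 := by linarith [hQ'.le.trans hδ1]
      have := abs_le.mp h1
      nlinarith
    calc (α - ε) * a ^ 2 ≤ α * a ^ 2 := by nlinarith [mul_nonneg hε.le (sq_nonneg a)]
      _ = -(M + 1) * a ^ 2 + (α + M + 1) * a ^ 2 := by ring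
      _ ≤ (inner ℝ (Q' z) z : ℝ) + ρ⁻¹ * ‖B' z‖ ^ 2 := add_le_add hQ'low hρinv
end

section
/- Let Z and Y be real Hilbert spaces, B : Z → Y a Fredholm bounded linear operator, and Q : Z → Z a bounded self-adjoint linear operator such that ⟪Qz, z⟫ ≥ α‖z‖² for all z ∈ ker B, for some α > 0. Then there exist κ > 0 and c₁ > 0 such that for every ρ ∈ (0, κ] and every (z, λ) ∈ Z × Y: ‖z‖ + ρ‖λ‖ ≤ c₁ (‖Qz + B†λ‖ + ‖Bz − ρλ‖). -/
set_option maxHeartbeats 1000000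

private lemma stmt4_arith (α β M : ℝ) (hα : 0 < α) (hβ : 0 < β) (hM : 0 ≤ M) :
    ∃ κ > (0:ℝ), ∃ c₁ > (0:ℝ), ∀ ρ a b l1 l2 L zn R S : ℝ,
      0 < ρ → ρ ≤ κ → 0 ≤ a → 0 ≤ b → 0 ≤ l1 → 0 ≤ l2 → 0 ≤ L → 0 ≤ zn →
      0 ≤ R → 0 ≤ S →
      β * b ≤ S + ρ * L → α * a ≤ R + M * b → β * l1 ≤ R + M * (a + b) →
      ρ * l2 ≤ S → L ≤ l1 + l2 → zn ≤ a + b →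
      zn + ρ * L ≤ c₁ * (R + S) := by
  set C0 : ℝ := 2 * (β*(α+M) + M*(α+M) + α*β^2) / (α*β^2) with hC0
  have hC0pos : 0 < C0 := by
    apply div_pos
    · nlinarith
    · positivity
  set Cv : ℝ := (1 + C0)/β with hCv
  have hCvpos : 0 < Cv := by positivity
  set Cu : ℝ := (1 + M*Cv)/α with hCu
  have hCupos : 0 < Cu := by positivity
  refine ⟨min 1 (α*β^2/(2*M*(α+M)+1)), lt_min one_pos (by positivity),
    Cu + Cv + C0, by positivity, ?_⟩
  intro ρ a b l1 l2 L zn R S hρ hκ ha hb hl1 hl2 hL hzn hR hS h1 h2 h3 h4 h5 h6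
  have hρ1 : ρ ≤ 1 := le_trans hκ (min_le_left _ _)
  have hsmall : ρ * (2*M*(α+M)) ≤ α*β^2 := by
    have h := le_trans hκ (min_le_right _ _)
    have hpos : (0:ℝ) < 2*M*(α+M)+1 := by positivity
    rw [le_div_iff₀ hpos] at h
    nlinarith
  -- key bound on ρ*L
  have hL0 : ρ * L ≤ C0 * (R + S) := by
    have t1 : α*ρ*(β*l1) ≤ α*ρ*(R + M*(a+b)) :=
      mul_le_mul_of_nonneg_left h3 (by positivity)
    have t2 : ρ*M*(α*a) ≤ ρ*M*(R + M*b) :=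
      mul_le_mul_of_nonneg_left h2 (by positivity)
    have t3 : α*β*(ρ*l1) ≤ (α+M)*(ρ*R) + M*(α+M)*(ρ*b) := by nlinarith [t1, t2]
    have t4 : β*(α*β*(ρ*l1)) ≤ β*((α+M)*(ρ*R) + M*(α+M)*(ρ*b)) :=
      mul_le_mul_of_nonneg_left t3 hβ.le
    have t4' : ρ*(M*(α+M))*(β*b) ≤ ρ*(M*(α+M))*(S + ρ*L) :=
      mul_le_mul_of_nonneg_left h1 (by positivity)
    have t5 : α*β^2*(ρ*l2) ≤ α*β^2*S := by nlinarith [mul_le_mul_of_nonneg_left h4 (show (0:ℝ) ≤ α*β^2 by positivity)]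
    have t6 : α*β^2*(ρ*L) ≤ α*β^2*(ρ*l1) + α*β^2*(ρ*l2) := by
      nlinarith [mul_le_mul_of_nonneg_left h5 (show (0:ℝ) ≤ α*β^2*ρ by positivity)]
    have t7 : ρ*(M*(α+M))*(ρ*L) ≤ (α*β^2/2)*(ρ*L) := by
      apply mul_le_mul_of_nonneg_right _ (by positivity)
      linarith
    have hr : β*(α+M)*(ρ*R) ≤ β*(α+M)*R := by
      nlinarith [mul_le_mul_of_nonneg_left hρ1 (show (0:ℝ) ≤ β*(α+M)*R by positivity)]
    have hs : ρ*(M*(α+M))*S ≤ M*(α+M)*S := by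
      nlinarith [mul_le_mul_of_nonneg_left hρ1 (show (0:ℝ) ≤ M*(α+M)*S by positivity)]
    have t8 : (α*β^2/2)*(ρ*L) ≤ β*(α+M)*R + (M*(α+M)+α*β^2)*S := by
      linarith [t4, t4', t5, t6, t7, hr, hs]
    have hcalc : (α*β^2/2)*C0 = β*(α+M) + M*(α+M) + α*β^2 := by
      rw [hC0]; field_simp
    have t9 : (α*β^2/2)*(ρ*L) ≤ (α*β^2/2)*(C0*(R+S)) := by
      have h9 : (α*β^2/2)*(C0*(R+S)) = (β*(α+M) + M*(α+M) + α*β^2)*(R+S) := by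
        rw [← mul_assoc, hcalc]
      rw [h9]
      nlinarith [t8, mul_nonneg (show (0:ℝ) ≤ β*(α+M) by positivity) hS,
        mul_nonneg (show (0:ℝ) ≤ M*(α+M)+α*β^2 by positivity) hR]
    exact le_of_mul_le_mul_left t9 (by positivity)
  have hbb : b ≤ Cv * (R + S) := by
    rw [hCv, div_mul_eq_mul_div, le_div_iff₀ hβ]
    nlinarith
  have haa : a ≤ Cu * (R + S) := by
    rw [hCu, div_mul_eq_mul_div, le_div_iff₀ hα]
    nlinarith
  nlinarith [haa, hbb, hL0, h6]
section Main
open RealInnerProductSpace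

variable {Z Y : Type*} [NormedAddCommGroup Z] [InnerProductSpace ℝ Z] [CompleteSpace Z]
  [NormedAddCommGroup Y] [InnerProductSpace ℝ Y] [CompleteSpace Y]

private lemma stmt4_bdd_below (B : Z →L[ℝ] Y)
    (hBrange : IsClosed (LinearMap.range (B : Z →ₗ[ℝ] Y) : Set Y)) :
    ∃ β > (0:ℝ), (∀ v ∈ (LinearMap.ker (B : Z →ₗ[ℝ] Y) : Submodule ℝ Z)ᗮ, β * ‖v‖ ≤ ‖B v‖) ∧
      (∀ y ∈ LinearMap.range (B : Z →ₗ[ℝ] Y), ∃ v ∈ (LinearMap.ker (B : Z →ₗ[ℝ] Y) : Submodule ℝ Z)ᗮ, B v = y) := by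
  set K : Submodule ℝ Z := LinearMap.ker (B : Z →ₗ[ℝ] Y) with hKdef
  haveI : CompleteSpace K := (ContinuousLinearMap.isClosed_ker B).completeSpace_coe
  haveI : CompleteSpace (Kᗮ : Submodule ℝ Z) := (Submodule.isClosed_orthogonal K).completeSpace_coe
  set Rg : Submodule ℝ Y := LinearMap.range (B : Z →ₗ[ℝ] Y) with hRdef
  haveI : CompleteSpace Rg := hBrange.completeSpace_coe
  have hsurj : ∀ y ∈ Rg, ∃ v ∈ Kᗮ, B v = y := by
    rintro y ⟨z, rfl⟩
    refine ⟨z - (K.orthogonalProjectionOnto z : Z), Submodule.sub_starProjection_mem_orthogonal (K := K) z, ?_⟩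
    have h0 : B ((K.orthogonalProjectionOnto z : Z)) = 0 :=
      LinearMap.mem_ker.mp (K.orthogonalProjectionOnto z).2
    rw [map_sub, h0, sub_zero]; rfl
  set f : Kᗮ →L[ℝ] Rg :=
    ContinuousLinearMap.codRestrict (B.comp (Kᗮ.subtypeL)) Rg
      (fun x => ⟨(x : Z), rfl⟩) with hfdef
  have hfval : ∀ x : Kᗮ, ((f x : Y)) = B (x : Z) := fun x => rfl
  have hinj : LinearMap.ker (f : Kᗮ →ₗ[ℝ] Rg) = ⊥ := by
    rw [Submodule.eq_bot_iff]
    rintro ⟨v, hv⟩ hmem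
    have hBv : B v = 0 := by
      have h := LinearMap.mem_ker.mp hmem
      have h2 : ((f ⟨v, hv⟩ : Rg) : Y) = 0 := congrArg Subtype.val h
      exact h2
    have hvK : v ∈ K := LinearMap.mem_ker.mpr hBv
    have hvv : ⟪v, v⟫ = 0 := (Submodule.mem_orthogonal K v).mp hv v hvK
    exact Subtype.ext (inner_self_eq_zero.mp hvv)
  have hsurjf : LinearMap.range (f : Kᗮ →ₗ[ℝ] Rg) = ⊤ := by
    rw [LinearMap.range_eq_top]
    rintro ⟨y, hy⟩
    obtain ⟨v, hvK, hv⟩ := hsurj y hy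
    exact ⟨⟨v, hvK⟩, Subtype.ext ((hfval _).trans hv)⟩
  set e := ContinuousLinearEquiv.ofBijective f hinj hsurjf with hedef
  set N : ℝ := ‖(e.symm : Rg →L[ℝ] Kᗮ)‖ with hNdef
  have hN : 0 ≤ N := norm_nonneg _
  refine ⟨(N + 1)⁻¹, by positivity, ?_, hsurj⟩
  intro v hv
  set x : Kᗮ := ⟨v, hv⟩ with hxdef
  have h1 : ‖x‖ ≤ N * ‖e x‖ := by
    have := (e.symm : Rg →L[ℝ] Kᗮ).le_opNorm (e x)
    simpa [ContinuousLinearEquiv.symm_apply_apply] using this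
  have h2 : ‖e x‖ = ‖B v‖ := by
    have hex : e x = f x := rfl
    rw [hex]
    show ‖(f x : Y)‖ = ‖B v‖
    rw [hfval]
  have h3 : ‖x‖ = ‖v‖ := rfl
  rw [h2, h3] at h1
  have hBn : 0 ≤ ‖B v‖ := norm_nonneg _
  rw [inv_mul_le_iff₀ (by positivity : (0:ℝ) < N + 1)]
  nlinarith

end Main
section MainThm
open RealInnerProductSpace

/-- Let `Z`, `Y` be real Hilbert spaces, `B : Z → Y` Fredholm,
`Q : Z → Z` bounded self-adjoint with `⟪Qz, z⟫ ≥ α‖z‖²` on `ker B` for some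
`α > 0`.  Then there exist `κ > 0` and `c₁ > 0` such that for every `ρ ∈ (0, κ]`
and every `(z, λ) ∈ Z × Y`:
`‖z‖ + ρ‖λ‖ ≤ c₁ (‖Qz + B†λ‖ + ‖Bz − ρλ‖)`. -/
theorem stmt4
    {Z Y : Type*} [NormedAddCommGroup Z] [InnerProductSpace ℝ Z] [CompleteSpace Z]
    [NormedAddCommGroup Y] [InnerProductSpace ℝ Y] [CompleteSpace Y]
    (B : Z →L[ℝ] Y)
    (hBker : FiniteDimensional ℝ (LinearMap.ker (B : Z →ₗ[ℝ] Y)))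
    (hBrange : IsClosed (LinearMap.range (B : Z →ₗ[ℝ] Y) : Set Y))
    (hBcodim : FiniteDimensional ℝ (Y ⧸ LinearMap.range (B : Z →ₗ[ℝ] Y)))
    (Q : Z →L[ℝ] Z)
    (hQsym : ∀ z₁ z₂ : Z, (inner ℝ (Q z₁) z₂ : ℝ) = inner ℝ (Q z₂) z₁)
    (α : ℝ) (hα : 0 < α)
    (hQcoer : ∀ z ∈ LinearMap.ker (B : Z →ₗ[ℝ] Y), α * ‖z‖ ^ 2 ≤ (inner ℝ (Q z) z : ℝ)) :
    ∃ κ > (0 : ℝ), ∃ c₁ > (0 : ℝ), ∀ ρ : ℝ, 0 < ρ → ρ ≤ κ →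
      ∀ (z : Z) (lam : Y),
        ‖z‖ + ρ * ‖lam‖ ≤
          c₁ * (‖Q z + (ContinuousLinearMap.adjoint B) lam‖ + ‖B z - ρ • lam‖) := by
  classical
  obtain ⟨β, hβ, hbdd, hsurj⟩ := stmt4_bdd_below B hBrange
  set K : Submodule ℝ Z := LinearMap.ker (B : Z →ₗ[ℝ] Y) with hKdef
  haveI : CompleteSpace K := (ContinuousLinearMap.isClosed_ker B).completeSpace_coe
  set Rg : Submodule ℝ Y := LinearMap.range (B : Z →ₗ[ℝ] Y) with hRdef
  haveI : CompleteSpace Rg := hBrange.completeSpace_coe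
  set B' := ContinuousLinearMap.adjoint B with hB'def
  -- adjoint bounded below on the range
  have habdd : ∀ y ∈ Rg, β * ‖y‖ ≤ ‖B' y‖ := by
    intro y hy
    obtain ⟨v, hvK, hv⟩ := hsurj y hy
    have h1 : ‖y‖ ^ 2 ≤ ‖B' y‖ * ‖v‖ := by
      have e1 : (⟪B' y, v⟫ : ℝ) = ⟪y, B v⟫ := ContinuousLinearMap.adjoint_inner_left B v y
      have e2 : (⟪y, B v⟫ : ℝ) = ‖y‖ ^ 2 := by rw [hv, real_inner_self_eq_norm_sq]
      calc ‖y‖ ^ 2 = ⟪B' y, v⟫ := by rw [e1, e2]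
        _ ≤ ‖B' y‖ * ‖v‖ := real_inner_le_norm _ _
    have h2 : β * ‖v‖ ≤ ‖y‖ := by rw [← hv]; exact hbdd v hvK
    rcases eq_or_lt_of_le (norm_nonneg y) with h0 | h0
    · rw [← h0]; simpa using norm_nonneg (B' y)
    · nlinarith [norm_nonneg v, norm_nonneg (B' y),
        mul_le_mul_of_nonneg_left h2 (norm_nonneg (B' y))]
  obtain ⟨κ, hκ, c₁, hc₁, harith⟩ := stmt4_arith α β ‖Q‖ hα hβ (norm_nonneg Q)
  refine ⟨κ, hκ, c₁, hc₁, ?_⟩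
  intro ρ hρ hρκ z lam
  set r : Z := Q z + B' lam with hrdef
  set s : Y := B z - ρ • lam with hsdef
  -- decompositions
  set u : Z := (K.orthogonalProjectionOnto z : Z) with hudef
  have huK : u ∈ K := (K.orthogonalProjectionOnto z).2
  set v : Z := z - u with hvdef
  have hvK : v ∈ Kᗮ := Submodule.sub_starProjection_mem_orthogonal (K := K) z
  have hzuv : z = u + v := by rw [hvdef]; abel
  set l1 : Y := (Rg.orthogonalProjectionOnto lam : Y) with hl1def
  have hl1R : l1 ∈ Rg := (Rg.orthogonalProjectionOnto lam).2
  set l2 : Y := lam - l1 with hl2def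
  have hl2R : l2 ∈ Rgᗮ := Submodule.sub_starProjection_mem_orthogonal (K := Rg) lam
  have hlam : lam = l1 + l2 := by rw [hl2def]; abel
  have hBu : B u = 0 := LinearMap.mem_ker.mp huK
  have hBl2 : ∀ x : Z, (⟪B x, l2⟫ : ℝ) = 0 := fun x =>
    (Submodule.mem_orthogonal Rg l2).mp hl2R (B x) ⟨x, rfl⟩
  have hnsmul : ‖ρ • lam‖ = ρ * ‖lam‖ := by
    rw [norm_smul, Real.norm_eq_abs, abs_of_pos hρ]
  -- (i)
  have h1 : β * ‖v‖ ≤ ‖s‖ + ρ * ‖lam‖ := by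
    have hBv : B v = s + ρ • lam := by rw [hvdef, map_sub, hBu, hsdef]; abel
    calc β * ‖v‖ ≤ ‖B v‖ := hbdd v hvK
      _ = ‖s + ρ • lam‖ := by rw [hBv]
      _ ≤ ‖s‖ + ‖ρ • lam‖ := norm_add_le _ _
      _ = ‖s‖ + ρ * ‖lam‖ := by rw [hnsmul]
  -- (ii)
  have h2 : α * ‖u‖ ≤ ‖r‖ + ‖Q‖ * ‖v‖ := by
    have hc : α * ‖u‖ ^ 2 ≤ ⟪Q u, u⟫ := hQcoer u huK
    have eQ : Q z = Q u + Q v := by rw [hzuv, map_add]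
    have e1 : (⟪Q z, u⟫ : ℝ) = ⟪Q u, u⟫ + ⟪Q v, u⟫ := by rw [eQ, inner_add_left]
    have e2 : (⟪r, u⟫ : ℝ) = ⟪Q z, u⟫ + ⟪B' lam, u⟫ := by rw [hrdef, inner_add_left]
    have e3 : (⟪B' lam, u⟫ : ℝ) = 0 := by
      rw [hB'def, ContinuousLinearMap.adjoint_inner_left, hBu, inner_zero_right]
    have b1 : (⟪r, u⟫ : ℝ) ≤ ‖r‖ * ‖u‖ := real_inner_le_norm _ _
    have b2 : -(⟪Q v, u⟫ : ℝ) ≤ ‖Q‖ * ‖v‖ * ‖u‖ := by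
      have := abs_real_inner_le_norm (Q v) u
      have hQv : ‖Q v‖ * ‖u‖ ≤ ‖Q‖ * ‖v‖ * ‖u‖ :=
        mul_le_mul_of_nonneg_right (Q.le_opNorm v) (norm_nonneg u)
      nlinarith [neg_abs_le (⟪Q v, u⟫ : ℝ)]
    have key : α * ‖u‖ ^ 2 ≤ (‖r‖ + ‖Q‖ * ‖v‖) * ‖u‖ := by nlinarith
    rcases eq_or_lt_of_le (norm_nonneg u) with h0 | h0
    · rw [← h0, mul_zero]; positivity
    · nlinarith
  -- (iii)
  have hBadj2 : B' l2 = 0 := by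
    have h0 : (⟪B' l2, B' l2⟫ : ℝ) = 0 := by
      rw [hB'def, ContinuousLinearMap.adjoint_inner_left, real_inner_comm]
      exact hBl2 _
    exact inner_self_eq_zero.mp h0
  have hB'lam : B' lam = B' l1 := by rw [hlam, map_add, hBadj2, add_zero]
  have h3 : β * ‖l1‖ ≤ ‖r‖ + ‖Q‖ * (‖u‖ + ‖v‖) := by
    have hz : ‖z‖ ≤ ‖u‖ + ‖v‖ := by rw [hzuv]; exact norm_add_le _ _
    calc β * ‖l1‖ ≤ ‖B' l1‖ := habdd l1 hl1R
      _ = ‖B' lam‖ := by rw [hB'lam]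
      _ = ‖r - Q z‖ := by rw [hrdef]; congr 1; abel
      _ ≤ ‖r‖ + ‖Q z‖ := norm_sub_le _ _
      _ ≤ ‖r‖ + ‖Q‖ * ‖z‖ := by linarith [Q.le_opNorm z]
      _ ≤ ‖r‖ + ‖Q‖ * (‖u‖ + ‖v‖) := by nlinarith [norm_nonneg Q]
  -- (iv)
  have h4 : ρ * ‖l2‖ ≤ ‖s‖ := by
    have hl12 : (⟪l1, l2⟫ : ℝ) = 0 := (Submodule.mem_orthogonal Rg l2).mp hl2R l1 hl1R
    have e1 : (⟪s, l2⟫ : ℝ) = -(ρ * ‖l2‖ ^ 2) := by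
      rw [hsdef, inner_sub_left, hBl2, real_inner_smul_left, hlam, inner_add_left, hl12,
        real_inner_self_eq_norm_sq]
      ring
    have e2 : |(⟪s, l2⟫ : ℝ)| ≤ ‖s‖ * ‖l2‖ := abs_real_inner_le_norm _ _
    rcases eq_or_lt_of_le (norm_nonneg l2) with h0 | h0
    · rw [← h0]; simpa using norm_nonneg s
    · nlinarith [neg_abs_le (⟪s, l2⟫ : ℝ), abs_nonneg (⟪s, l2⟫ : ℝ)]
  have h5 : ‖lam‖ ≤ ‖l1‖ + ‖l2‖ := by rw [hlam]; exact norm_add_le _ _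
  have h6 : ‖z‖ ≤ ‖u‖ + ‖v‖ := by rw [hzuv]; exact norm_add_le _ _
  exact harith ρ ‖u‖ ‖v‖ ‖l1‖ ‖l2‖ ‖lam‖ ‖z‖ ‖r‖ ‖s‖ hρ hρκ (norm_nonneg u)
    (norm_nonneg v) (norm_nonneg l1) (norm_nonneg l2) (norm_nonneg lam) (norm_nonneg z)
    (norm_nonneg r) (norm_nonneg s) h1 h2 h3 h4 h5 h6

end MainThm
end

section
/- Let Z and Y be real Hilbert spaces, B : Z → Y a Fredholm bounded linear operator, and Q : Z → Z a bounded self-adjoint linear operator such that ⟪Qz, z⟫ ≥ α‖z‖² for all z ∈ ker B, for some α > 0. Then there exists σ > 0 such that for every ρ ∈ (0, σ] the bounded linear operator A_ρ : Z × Y → Z × Y, A_ρ(z, λ) = (Qz + B†λ, Bz − ρλ), is bijective (hence has a bounded inverse). -/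
/-- A coercive bounded operator on a real Hilbert space is bijective. -/
lemma coercive_bijective_aux {Z : Type*} [NormedAddCommGroup Z] [InnerProductSpace ℝ Z]
    [CompleteSpace Z] (T : Z →L[ℝ] Z) (c : ℝ) (hc : 0 < c)
    (h : ∀ z, c * ‖z‖ ^ 2 ≤ (inner ℝ (T z) z : ℝ)) :
    Function.Bijective T := by
  have hbb : ∀ z, c * ‖z‖ ≤ ‖T z‖ := by
    intro z
    rcases eq_or_ne z 0 with rfl | hz
    · simp
    · have h1 := h z
      have h2 : (inner ℝ (T z) z : ℝ) ≤ ‖T z‖ * ‖z‖ := real_inner_le_norm _ _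
      have hzpos : 0 < ‖z‖ := norm_pos_iff.mpr hz
      nlinarith
  have hinj : Function.Injective T := by
    intro a b hab
    have : T (a - b) = 0 := by simp [map_sub, hab]
    have h3 := hbb (a - b)
    rw [this] at h3
    simp at h3
    have : ‖a - b‖ ≤ 0 := by nlinarith
    have := le_antisymm this (norm_nonneg _)
    simpa [sub_eq_zero] using norm_eq_zero.mp this
  refine ⟨hinj, ?_⟩
  have hanti : AntilipschitzWith (⟨c⁻¹, by positivity⟩ : NNReal) T :=
    ContinuousLinearMap.antilipschitz_of_bound T (fun x => by
      have := hbb x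
      show ‖x‖ ≤ c⁻¹ * ‖T x‖
      rw [le_inv_mul_iff₀ hc]
      linarith)
  have hclosed : IsClosed (LinearMap.range (T : Z →ₗ[ℝ] Z) : Set Z) := by
    have := hanti.isClosed_range T.uniformContinuous
    rw [LinearMap.coe_range]; exact this
  haveI : CompleteSpace (LinearMap.range (T : Z →ₗ[ℝ] Z)) := hclosed.completeSpace_coe
  have horth : (LinearMap.range (T : Z →ₗ[ℝ] Z))ᗮ = ⊥ := by
    rw [Submodule.eq_bot_iff]
    intro x hx
    have hx0 : (inner ℝ (T x) x : ℝ) = 0 := hx (T x) (LinearMap.mem_range_self _ x)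
    have := h x
    rw [hx0] at this
    have h2 : ‖x‖ ^ 2 ≤ 0 := le_of_mul_le_mul_left (by simpa using this) hc
    have h3 : ‖x‖ ^ 2 = 0 := le_antisymm h2 (sq_nonneg _)
    simpa using sq_eq_zero_iff.mp h3
  have : LinearMap.range (T : Z →ₗ[ℝ] Z) = ⊤ := by
    rwa [Submodule.orthogonal_eq_bot_iff] at horth
  exact LinearMap.range_eq_top.mp this

/-- A Fredholm-type operator is bounded below on the orthogonal complement of its kernel. -/
lemma bounded_below_aux {Z Y : Type*} [NormedAddCommGroup Z] [InnerProductSpace ℝ Z]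
    [CompleteSpace Z] [NormedAddCommGroup Y] [InnerProductSpace ℝ Y] [CompleteSpace Y]
    (B : Z →L[ℝ] Y)
    (hBker : FiniteDimensional ℝ (LinearMap.ker (B : Z →ₗ[ℝ] Y)))
    (hBrange : IsClosed (LinearMap.range (B : Z →ₗ[ℝ] Y) : Set Y)) :
    ∃ C : ℝ, 0 < C ∧ ∀ v ∈ (LinearMap.ker (B : Z →ₗ[ℝ] Y))ᗮ, ‖v‖ ≤ C * ‖B v‖ := by
  haveI : CompleteSpace (LinearMap.ker (B : Z →ₗ[ℝ] Y)) := FiniteDimensional.complete ℝ _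
  haveI : CompleteSpace (LinearMap.range (B : Z →ₗ[ℝ] Y)) := hBrange.completeSpace_coe
  set K := LinearMap.ker (B : Z →ₗ[ℝ] Y) with hK
  have hmem : ∀ v : Kᗮ, B v ∈ LinearMap.range (B : Z →ₗ[ℝ] Y) := fun v => LinearMap.mem_range_self _ _
  let B' : Kᗮ →L[ℝ] (LinearMap.range (B : Z →ₗ[ℝ] Y)) :=
    ContinuousLinearMap.codRestrict (B.comp Kᗮ.subtypeL) _ hmem
  have hinj : LinearMap.ker (B' : Kᗮ →ₗ[ℝ] LinearMap.range (B : Z →ₗ[ℝ] Y)) = ⊥ := by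
    rw [Submodule.eq_bot_iff]
    intro v hv
    have hv' : B (v : Z) = 0 := by
      have : B' v = 0 := hv
      exact congrArg Subtype.val this
    have hvK : (v : Z) ∈ K := hv'
    have : (inner ℝ (v : Z) (v : Z) : ℝ) = 0 := v.2 (v : Z) hvK
    exact Subtype.ext (by simpa using inner_self_eq_zero.mp this)
  have hsurj : LinearMap.range (B' : Kᗮ →ₗ[ℝ] LinearMap.range (B : Z →ₗ[ℝ] Y)) = ⊤ := by
    rw [LinearMap.range_eq_top]
    rintro ⟨y, z, rfl⟩
    obtain ⟨u, hu, v, hv, rfl⟩ := Submodule.exists_add_mem_mem_orthogonal (K := K) z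
    refine ⟨⟨v, hv⟩, ?_⟩
    apply Subtype.ext
    show B v = B (u + v)
    simp [map_add, show B u = 0 from LinearMap.mem_ker.mp hu]
  let e := ContinuousLinearEquiv.ofBijective B' hinj hsurj
  refine ⟨‖(e.symm : (LinearMap.range (B : Z →ₗ[ℝ] Y)) →L[ℝ] Kᗮ)‖ + 1, by positivity, ?_⟩
  intro v hv
  have h1 : e.symm (e ⟨v, hv⟩) = ⟨v, hv⟩ := e.symm_apply_apply _
  have h2 : ‖(⟨v, hv⟩ : Kᗮ)‖ ≤ ‖(e.symm : (LinearMap.range (B : Z →ₗ[ℝ] Y)) →L[ℝ] Kᗮ)‖ * ‖e ⟨v, hv⟩‖ := by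
    have := (e.symm : (LinearMap.range (B : Z →ₗ[ℝ] Y)) →L[ℝ] Kᗮ).le_opNorm (e ⟨v, hv⟩)
    rwa [show (e.symm : (LinearMap.range (B : Z →ₗ[ℝ] Y)) →L[ℝ] Kᗮ) (e ⟨v, hv⟩) = ⟨v, hv⟩ from h1] at this
  have h3 : ‖e ⟨v, hv⟩‖ = ‖B v‖ := rfl
  rw [h3] at h2
  have : ‖(⟨v, hv⟩ : Kᗮ)‖ = ‖v‖ := rfl
  rw [this] at h2
  nlinarith [norm_nonneg (B v), norm_nonneg v]

set_option maxHeartbeats 1000000 in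
/-- Let `Z`, `Y` be real Hilbert spaces, `B : Z → Y` Fredholm,
`Q : Z → Z` bounded self-adjoint with `⟪Qz, z⟫ ≥ α‖z‖²` on `ker B` for some
`α > 0`.  Then there exists `σ > 0` such that for every `ρ ∈ (0, σ]` the
bounded linear operator `A_ρ(z, λ) = (Qz + B†λ, Bz − ρλ)` on `Z × Y` is
bijective. -/
theorem stmt5
    {Z Y : Type*} [NormedAddCommGroup Z] [InnerProductSpace ℝ Z] [CompleteSpace Z]
    [NormedAddCommGroup Y] [InnerProductSpace ℝ Y] [CompleteSpace Y]
    (B : Z →L[ℝ] Y)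
    (hBker : FiniteDimensional ℝ (LinearMap.ker (B : Z →ₗ[ℝ] Y)))
    (hBrange : IsClosed (LinearMap.range (B : Z →ₗ[ℝ] Y) : Set Y))
    (hBcodim : FiniteDimensional ℝ (Y ⧸ LinearMap.range (B : Z →ₗ[ℝ] Y)))
    (Q : Z →L[ℝ] Z)
    (hQsym : ∀ z₁ z₂ : Z, (inner ℝ (Q z₁) z₂ : ℝ) = inner ℝ (Q z₂) z₁)
    (α : ℝ) (hα : 0 < α)
    (hQcoer : ∀ z ∈ LinearMap.ker (B : Z →ₗ[ℝ] Y), α * ‖z‖ ^ 2 ≤ (inner ℝ (Q z) z : ℝ)) :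
    ∃ σ > (0 : ℝ), ∀ ρ : ℝ, 0 < ρ → ρ ≤ σ →
      Function.Bijective (fun w : Z × Y =>
        ((Q w.1 + (ContinuousLinearMap.adjoint B) w.2, B w.1 - ρ • w.2) : Z × Y)) := by
  haveI : CompleteSpace (LinearMap.ker (B : Z →ₗ[ℝ] Y)) := FiniteDimensional.complete ℝ _
  obtain ⟨C, hC, hCb⟩ := bounded_below_aux B hBker hBrange
  set K := LinearMap.ker (B : Z →ₗ[ℝ] Y) with hKdef
  set M : ℝ := ‖Q‖ + 1 with hMdef
  have hM : 0 < M := by positivity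
  have hQbound : ∀ x y : Z, -(M * ‖x‖ * ‖y‖) ≤ (inner ℝ (Q x) y : ℝ) := by
    intro x y
    have h1 : |(inner ℝ (Q x) y : ℝ)| ≤ ‖Q x‖ * ‖y‖ := abs_real_inner_le_norm _ _
    have h2 : ‖Q x‖ ≤ ‖Q‖ * ‖x‖ := Q.le_opNorm x
    have h3 : ‖Q x‖ * ‖y‖ ≤ M * ‖x‖ * ‖y‖ := by
      have h2' := mul_le_mul_of_nonneg_right h2 (norm_nonneg y)
      have h2'' : ‖Q‖ * ‖x‖ * ‖y‖ ≤ M * ‖x‖ * ‖y‖ := by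
        rw [hMdef]
        nlinarith [norm_nonneg x, norm_nonneg y]
      linarith
    linarith [abs_le.mp (h1.trans h3)]
  set σ : ℝ := α / (2 * C ^ 2 * (α * M + 2 * M ^ 2)) with hσdef
  have hσ : 0 < σ := by positivity
  refine ⟨σ, hσ, ?_⟩
  intro ρ hρ hρσ
  -- the reduced operator T = ρ Q + B† B
  set T : Z →L[ℝ] Z := ρ • Q + (ContinuousLinearMap.adjoint B).comp B with hTdef
  have hTapp : ∀ z : Z, T z = ρ • Q z + (ContinuousLinearMap.adjoint B) (B z) := by
    intro z; simp [hTdef]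
  -- coercivity of T
  set c : ℝ := min (ρ * α / 2) (1 / (2 * C ^ 2)) with hcdef
  have hcpos : 0 < c := lt_min (by positivity) (by positivity)
  have hcoer : ∀ z : Z, c * ‖z‖ ^ 2 ≤ (inner ℝ (T z) z : ℝ) := by
    intro z
    obtain ⟨u, hu, v, hv, rfl⟩ := Submodule.exists_add_mem_mem_orthogonal (K := K) z
    have ha : 0 ≤ ‖u‖ := norm_nonneg _
    have hb : 0 ≤ ‖v‖ := norm_nonneg _
    have huv : (inner ℝ u v : ℝ) = 0 := hv u hu
    have hnorm : ‖u + v‖ ^ 2 = ‖u‖ ^ 2 + ‖v‖ ^ 2 := by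
      have hh := norm_add_sq_real u v
      rw [huv] at hh
      simpa using hh
    have hBz : B (u + v) = B v := by
      simp [map_add, show B u = 0 from LinearMap.mem_ker.mp hu]
    have hbB : 0 ≤ ‖B v‖ := norm_nonneg _
    have h4 : ‖v‖ ^ 2 ≤ C ^ 2 * ‖B v‖ ^ 2 := by nlinarith [hCb v hv]
    have h5 : ρ * (2 * C ^ 2 * (α * M + 2 * M ^ 2)) ≤ α := by
      have := (le_div_iff₀ (by positivity : (0:ℝ) < 2 * C ^ 2 * (α * M + 2 * M ^ 2))).mp hρσ
      linarith
    -- inner product expansion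
    have hT2 : (inner ℝ (T (u + v)) (u + v) : ℝ)
        = ρ * (inner ℝ (Q (u + v)) (u + v) : ℝ) + ‖B v‖ ^ 2 := by
      rw [hTapp]
      rw [inner_add_left, real_inner_smul_left, ContinuousLinearMap.adjoint_inner_left,
        hBz, real_inner_self_eq_norm_sq]
    have hQz : (inner ℝ (Q (u + v)) (u + v) : ℝ)
        = (inner ℝ (Q u) u : ℝ) + 2 * (inner ℝ (Q u) v : ℝ) + (inner ℝ (Q v) v : ℝ) := by
      rw [map_add, inner_add_left, inner_add_right, inner_add_right, hQsym v u]
      ring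
    have h1 : ρ * (α * ‖u‖ ^ 2) ≤ ρ * (inner ℝ (Q u) u : ℝ) :=
      mul_le_mul_of_nonneg_left (hQcoer u hu) hρ.le
    have h2 : ρ * (-(M * ‖u‖ * ‖v‖)) ≤ ρ * (inner ℝ (Q u) v : ℝ) :=
      mul_le_mul_of_nonneg_left (hQbound u v) hρ.le
    have h3 : ρ * (-(M * ‖v‖ * ‖v‖)) ≤ ρ * (inner ℝ (Q v) v : ℝ) :=
      mul_le_mul_of_nonneg_left (hQbound v v) hρ.le
    -- Young's inequality
    have hy6 : (0:ℝ) ≤ ρ * (α * ‖u‖ - 2 * M * ‖v‖) ^ 2 / (2 * α) := by positivity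
    have hy7 : ρ * (α * ‖u‖ - 2 * M * ‖v‖) ^ 2 / (2 * α)
        = ρ * α / 2 * ‖u‖ ^ 2 - 2 * ρ * M * (‖u‖ * ‖v‖) + 2 * ρ * M ^ 2 / α * ‖v‖ ^ 2 := by
      field_simp
      ring
    have hyoung : 2 * ρ * M * (‖u‖ * ‖v‖)
        ≤ ρ * α / 2 * ‖u‖ ^ 2 + 2 * ρ * M ^ 2 / α * ‖v‖ ^ 2 := by
      rw [hy7] at hy6; linarith
    -- absorption
    have h8 : ρ * M + 2 * ρ * M ^ 2 / α ≤ 1 / (2 * C ^ 2) := by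
      rw [show ρ * M + 2 * ρ * M ^ 2 / α = ρ * (α * M + 2 * M ^ 2) / α by field_simp,
        div_le_div_iff₀ hα (by positivity : (0:ℝ) < 2 * C ^ 2)]
      ring_nf
      ring_nf at h5
      linarith
    have h8b : (ρ * M + 2 * ρ * M ^ 2 / α) * ‖v‖ ^ 2 ≤ 1 / (2 * C ^ 2) * ‖v‖ ^ 2 :=
      mul_le_mul_of_nonneg_right h8 (sq_nonneg _)
    have hA : 1 / (2 * C ^ 2) * ‖v‖ ^ 2 ≤ ‖B v‖ ^ 2 / 2 := by
      have h9 := mul_le_mul_of_nonneg_left h4 (by positivity : (0:ℝ) ≤ 1 / (2 * C ^ 2))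
      have h10 : 1 / (2 * C ^ 2) * (C ^ 2 * ‖B v‖ ^ 2) = ‖B v‖ ^ 2 / 2 := by
        field_simp
      linarith
    have hc1 : c ≤ ρ * α / 2 := min_le_left _ _
    have hc2 : c ≤ 1 / (2 * C ^ 2) := min_le_right _ _
    rw [hT2, hQz, hnorm]
    have hc1b : c * ‖u‖ ^ 2 ≤ ρ * α / 2 * ‖u‖ ^ 2 :=
      mul_le_mul_of_nonneg_right hc1 (sq_nonneg ‖u‖)
    have hc2b : c * ‖v‖ ^ 2 ≤ 1 / (2 * C ^ 2) * ‖v‖ ^ 2 :=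
      mul_le_mul_of_nonneg_right hc2 (sq_nonneg ‖v‖)
    clear hT2 hTapp hQz hy6 hy7 hc1 hc2 h4 h5 hρσ hσ hnorm hBz hCb hQbound hQcoer hQsym huv hcpos hcdef hσdef hTdef hMdef
    clear_value c M T σ
    clear T σ
    linarith
  have hTbij : Function.Bijective T := coercive_bijective_aux T c hcpos hcoer
  constructor
  · -- injectivity
    intro w w' hww
    simp only [Prod.mk.injEq] at hww
    obtain ⟨hww1, hww2⟩ := hww
    set p := w.1 - w'.1 with hpdef
    set q := w.2 - w'.2 with hqdef
    have hp1 : Q p + (ContinuousLinearMap.adjoint B) q = 0 := by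
      simp only [hpdef, hqdef, map_sub]
      rw [show Q w.1 - Q w'.1 + ((ContinuousLinearMap.adjoint B) w.2
          - (ContinuousLinearMap.adjoint B) w'.2)
        = (Q w.1 + (ContinuousLinearMap.adjoint B) w.2)
          - (Q w'.1 + (ContinuousLinearMap.adjoint B) w'.2) by abel, hww1, sub_self]
    have hp2 : B p = ρ • q := by
      simp only [hpdef, hqdef, map_sub, smul_sub]
      have : B w.1 - B w'.1 - (ρ • w.2 - ρ • w'.2)
          = (B w.1 - ρ • w.2) - (B w'.1 - ρ • w'.2) := by abel
      have h0 : B w.1 - B w'.1 - (ρ • w.2 - ρ • w'.2) = 0 := by rw [this, hww2, sub_self]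
      exact sub_eq_zero.mp h0
    have hTp : T p = 0 := by
      rw [hTapp, hp2, map_smul, ← smul_add, hp1, smul_zero]
    have hp0 : p = 0 := hTbij.1 (by rw [hTp, map_zero])
    have hq0 : q = 0 := by
      have h11 := hp2
      rw [hp0, map_zero] at h11
      rcases smul_eq_zero.mp h11.symm with h | h
      · exact absurd h hρ.ne'
      · exact h
    exact Prod.ext (sub_eq_zero.mp hp0) (sub_eq_zero.mp hq0)
  · -- surjectivity
    intro fg
    obtain ⟨z, hz⟩ := hTbij.2 (ρ • fg.1 + (ContinuousLinearMap.adjoint B) fg.2)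
    rw [hTapp] at hz
    have h12 : (ContinuousLinearMap.adjoint B) (B z)
        = (ρ • fg.1 + (ContinuousLinearMap.adjoint B) fg.2) - ρ • Q z := by
      rw [eq_sub_iff_add_eq, add_comm]; exact hz
    have key1 : Q z + (ContinuousLinearMap.adjoint B) (ρ⁻¹ • (B z - fg.2)) = fg.1 := by
      rw [map_smul, map_sub, h12]
      rw [show ρ • fg.1 + (ContinuousLinearMap.adjoint B) fg.2 - ρ • Q z
          - (ContinuousLinearMap.adjoint B) fg.2 = ρ • fg.1 - ρ • Q z by abel]
      rw [smul_sub, smul_smul, smul_smul, inv_mul_cancel₀ hρ.ne', one_smul, one_smul]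
      abel
    have key2 : B z - ρ • (ρ⁻¹ • (B z - fg.2)) = fg.2 := by
      rw [smul_smul, mul_inv_cancel₀ hρ.ne', one_smul, sub_sub_cancel]
    exact ⟨(z, ρ⁻¹ • (B z - fg.2)), Prod.ext key1 key2⟩
end

section
/- Let X and Y be real Hilbert spaces, let y₁, …, y_m ∈ Y, set S = span{y₁, …, y_m} and K = {Σᵢ μᵢ yᵢ : μᵢ ≥ 0} with polar cone K° = {λ ∈ Y : ⟪λ, y⟫ ≤ 0 for all y ∈ K}. Let B : X → Y be a Fredholm bounded linear operator and Q : X → X a bounded self-adjoint linear operator such that ⟪Qx, x⟫ ≥ α‖x‖² for some α > 0 and all x ∈ X with Bx ∈ S (in particular for all x ∈ ker B). Then there exists σ > 0 such that for every ρ ∈ (0, σ] and every pair (φ, r) ∈ X × Y the system: λ ∈ K°, Qz + B†λ + φ = 0, Bz + r − ρλ ∈ K, and ⟪λ, Bz + r − ρλ⟫ = 0, has exactly one solution (z, λ) ∈ X × Y. -/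
/-- Projection onto a nonempty closed convex set: existence and uniqueness of the
variational characterization. -/
lemma proj_existsUnique {Y : Type*} [NormedAddCommGroup Y] [InnerProductSpace ℝ Y]
    [CompleteSpace Y] (C : Set Y) (hconv : Convex ℝ C) (hcl : IsClosed C)
    (hne : C.Nonempty) (v : Y) :
    ∃! b : Y, b ∈ C ∧ ∀ w ∈ C, (inner ℝ (v - b) (w - b) : ℝ) ≤ 0 := by
  obtain ⟨b, hbC, hbmin⟩ := exists_norm_eq_iInf_of_complete_convex hne hcl.isComplete hconv v
  refine ⟨b, ⟨hbC, (norm_eq_iInf_iff_real_inner_le_zero hconv hbC).mp hbmin⟩, ?_⟩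
  rintro b' ⟨hb'C, hb'⟩
  have h1 : (inner ℝ (v - b) (b' - b) : ℝ) ≤ 0 :=
    ((norm_eq_iInf_iff_real_inner_le_zero hconv hbC).mp hbmin) b' hb'C
  have h2 : (inner ℝ (v - b') (b - b') : ℝ) ≤ 0 := hb' b hbC
  have e : (inner ℝ (v - b) (b' - b) : ℝ) + inner ℝ (v - b') (b - b')
      = inner ℝ (b' - b) (b' - b) := by
    have : (inner ℝ (v - b') (b - b') : ℝ) = - inner ℝ (v - b') (b' - b) := by
      rw [← inner_neg_right]; congr 1; abel
    rw [this, ← sub_eq_add_neg, ← inner_sub_left]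
    congr 1; abel
  have key : (inner ℝ (b' - b) (b' - b) : ℝ) ≤ 0 := e ▸ add_nonpos h1 h2
  have hz : (inner ℝ (b' - b) (b' - b) : ℝ) = 0 :=
    le_antisymm key real_inner_self_nonneg
  exact sub_eq_zero.mp (inner_self_eq_zero.mp hz)


/-- A strongly monotone Lipschitz operator on a real Hilbert space has a unique zero. -/
lemma strongMono_existsUnique_zero {X : Type*} [NormedAddCommGroup X]
    [InnerProductSpace ℝ X] [CompleteSpace X] (T : X → X) (c L : ℝ) (hc : 0 < c)
    (hmono : ∀ a b : X, c * ‖a - b‖ ^ 2 ≤ (inner ℝ (T a - T b) (a - b) : ℝ))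
    (hlip : ∀ a b : X, ‖T a - T b‖ ≤ L * ‖a - b‖) :
    ∃! z : X, T z = 0 := by
  -- uniqueness is immediate from strong monotonicity
  have huniq : ∀ z₁ z₂ : X, T z₁ = 0 → T z₂ = 0 → z₁ = z₂ := by
    intro z₁ z₂ h1 h2
    have := hmono z₁ z₂
    rw [h1, h2, sub_zero, inner_zero_left] at this
    have hn : ‖z₁ - z₂‖ ^ 2 ≤ 0 := by nlinarith
    have : ‖z₁ - z₂‖ = 0 := by nlinarith [norm_nonneg (z₁ - z₂), sq_nonneg ‖z₁ - z₂‖]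
    exact sub_eq_zero.mp (norm_eq_zero.mp this)
  -- Lipschitz constant can be enlarged
  set L' : ℝ := max L c with hL'
  have hL'pos : 0 < L' := lt_of_lt_of_le hc (le_max_right _ _)
  have hlip' : ∀ a b : X, ‖T a - T b‖ ≤ L' * ‖a - b‖ := fun a b =>
    le_trans (hlip a b) (mul_le_mul_of_nonneg_right (le_max_left _ _) (norm_nonneg _))
  have hcL : c ≤ L' := le_max_right _ _
  set t : ℝ := c / L' ^ 2 with ht
  have htpos : 0 < t := div_pos hc (by positivity)
  set g : X → X := fun z => z - t • T z with hg
  -- contraction estimate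
  have hcontr : ∀ a b : X, ‖g a - g b‖ ^ 2 ≤ (1 - c ^ 2 / L' ^ 2) * ‖a - b‖ ^ 2 := by
    intro a b
    have e : g a - g b = (a - b) - t • (T a - T b) := by
      simp only [hg, smul_sub]; abel
    rw [e, norm_sub_sq_real]
    rw [real_inner_smul_right, norm_smul, Real.norm_eq_abs, abs_of_pos htpos]
    have h1 := hmono a b
    have h2 := hlip' a b
    have h3 : ‖T a - T b‖ ^ 2 ≤ (L' * ‖a - b‖) ^ 2 := by
      apply sq_le_sq' _ h2; nlinarith [norm_nonneg (T a - T b)]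
    have hinner : (inner ℝ (T a - T b) (a - b) : ℝ) = inner ℝ (a - b) (T a - T b) :=
      real_inner_comm _ _
    have ht2 : t * L' ^ 2 = c := by rw [ht]; field_simp
    have ht3 : c ^ 2 / L' ^ 2 = t * c := by rw [ht]; field_simp
    have hB : (t * ‖T a - T b‖) ^ 2 ≤ c * (t * ‖a - b‖ ^ 2) := by
      calc (t * ‖T a - T b‖) ^ 2 = t ^ 2 * ‖T a - T b‖ ^ 2 := by ring
        _ ≤ t ^ 2 * (L' * ‖a - b‖) ^ 2 :=
            mul_le_mul_of_nonneg_left h3 (sq_nonneg t)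
        _ = (t * L' ^ 2) * (t * ‖a - b‖ ^ 2) := by ring
        _ = c * (t * ‖a - b‖ ^ 2) := by rw [ht2]
    have hA : t * (c * ‖a - b‖ ^ 2) ≤ t * inner ℝ (a - b) (T a - T b) := by
      rw [← hinner]; exact mul_le_mul_of_nonneg_left h1 htpos.le
    rw [ht3]
    nlinarith [hA, hB]
  have hfrac : 0 ≤ 1 - c ^ 2 / L' ^ 2 := by
    have : c ^ 2 ≤ L' ^ 2 := by nlinarith
    have : c ^ 2 / L' ^ 2 ≤ 1 := by
      rw [div_le_one (by positivity)]; exact this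
    linarith
  set k : ℝ := Real.sqrt (1 - c ^ 2 / L' ^ 2) with hk
  have hk1 : k < 1 := by
    have h0 : 0 < c ^ 2 / L' ^ 2 := by positivity
    have : k < Real.sqrt 1 := Real.sqrt_lt_sqrt hfrac (by linarith)
    simpa using this
  have hklip : LipschitzWith (Real.toNNReal k) g := by
    apply LipschitzWith.of_dist_le_mul
    intro a b
    rw [dist_eq_norm, dist_eq_norm, Real.coe_toNNReal _ (Real.sqrt_nonneg _)]
    have h := hcontr a b
    have : ‖g a - g b‖ ^ 2 ≤ (k * ‖a - b‖) ^ 2 := by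
      rw [mul_pow, hk, Real.sq_sqrt hfrac]; exact h
    have hkn : 0 ≤ k * ‖a - b‖ := mul_nonneg (Real.sqrt_nonneg _) (norm_nonneg _)
    nlinarith [norm_nonneg (g a - g b)]
  have hcw : ContractingWith (Real.toNNReal k) g := by
    constructor
    · rw [← NNReal.coe_lt_coe, Real.coe_toNNReal _ (Real.sqrt_nonneg _)]; exact hk1
    · exact hklip
  haveI : Nonempty X := ⟨0⟩
  obtain ⟨z, hz⟩ := hcw.exists_fixedPoint 0 (by
    apply edist_ne_top)
  have hTz : T z = 0 := by
    have : z - t • T z = z := hz.1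
    have h2 : t • T z = 0 := by
      have := sub_eq_iff_eq_add.mp this
      have : t • T z = z - z := by rw [sub_self]; linear_combination (norm := abel) -this
      simpa using this
    rcases smul_eq_zero.mp h2 with h | h
    · exact absurd h (ne_of_gt htpos)
    · exact h
  exact ⟨z, hTz, fun y hy => huniq y z hy hTz⟩


open Finset in
/-- Conic Carathéodory: any nonnegative combination can be rewritten as a nonnegative
combination whose actively used generators are linearly independent. -/
lemma cone_caratheodory {Y : Type*} [AddCommGroup Y] [Module ℝ Y] {m : ℕ}
    (yv : Fin m → Y) :
    ∀ n : ℕ, ∀ μ : Fin m → ℝ, (∀ i, 0 ≤ μ i) →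
      (Finset.univ.filter (fun i => μ i ≠ 0)).card ≤ n →
      ∃ ν : Fin m → ℝ, (∀ i, 0 ≤ ν i) ∧ (∑ i, ν i • yv i = ∑ i, μ i • yv i) ∧
        LinearIndependent ℝ (fun i : {i : Fin m // ν i ≠ 0} => yv i) := by
  classical
  intro n
  induction n with
  | zero =>
    intro μ hμ hcard
    refine ⟨μ, hμ, rfl, ?_⟩
    have hempty : ∀ i, ¬(μ i ≠ 0) := by
      intro i hi
      have : i ∈ Finset.univ.filter (fun i => μ i ≠ 0) := by
        simp [hi]
      have := Finset.card_pos.mpr ⟨i, this⟩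
      omega
    haveI : IsEmpty {i : Fin m // μ i ≠ 0} := ⟨fun ⟨i, h⟩ => hempty i h⟩
    exact linearIndependent_empty_type
  | succ n ih =>
    intro μ hμ hcard
    by_cases hind : LinearIndependent ℝ (fun i : {i : Fin m // μ i ≠ 0} => yv i)
    · exact ⟨μ, hμ, rfl, hind⟩
    obtain ⟨g, hgsum, i₀, hgi₀⟩ := Fintype.not_linearIndependent_iff.mp hind
    -- extend g to a function on `Fin m`, and arrange a positive value
    obtain ⟨c, hcsum, hcsupp, j₀, hj₀⟩ :
        ∃ c : Fin m → ℝ, (∑ i, c i • yv i = 0) ∧ (∀ i, c i ≠ 0 → μ i ≠ 0) ∧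
          ∃ j, 0 < c j := by
      set c0 : Fin m → ℝ := fun i => if h : μ i ≠ 0 then g ⟨i, h⟩ else 0 with hc0
      have hsum0 : ∑ i, c0 i • yv i = 0 := by
        have e1 : ∑ i : {i : Fin m // μ i ≠ 0}, g i • yv i.1
            = ∑ i : {i : Fin m // μ i ≠ 0}, c0 i.1 • yv i.1 := by
          apply Finset.sum_congr rfl
          rintro ⟨i, hi⟩ _
          simp [hc0, hi]
        have e2 : ∑ i ∈ Finset.univ.filter (fun i => μ i ≠ 0), c0 i • yv i
            = ∑ i : {i : Fin m // μ i ≠ 0}, c0 i.1 • yv i.1 :=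
          Finset.sum_subtype _ (fun i => by simp) _
        have e3 : ∑ i, c0 i • yv i
            = ∑ i ∈ Finset.univ.filter (fun i => μ i ≠ 0), c0 i • yv i := by
          refine (Finset.sum_subset (Finset.filter_subset _ _) ?_).symm
          intro i _ hni
          simp only [Finset.mem_filter, Finset.mem_univ, true_and, not_not] at hni
          simp [hc0, hni]
        rw [e3, e2, ← e1, hgsum]
      have hsupp0 : ∀ i, c0 i ≠ 0 → μ i ≠ 0 := by
        intro i hi
        by_contra h
        apply hi
        simp [hc0, h]
      have hc0i₀ : c0 i₀.1 ≠ 0 := by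
        simpa [hc0, i₀.2] using hgi₀
      by_cases hpos : ∃ j, 0 < c0 j
      · exact ⟨c0, hsum0, hsupp0, hpos⟩
      · push_neg at hpos
        refine ⟨-c0, by simp [hsum0], fun i hi => hsupp0 i (by simpa using hi), i₀.1, ?_⟩
        simp only [Pi.neg_apply, neg_pos]
        exact lt_of_le_of_ne (hpos i₀.1) hc0i₀
    -- minimal ratio
    set F : Finset (Fin m) := Finset.univ.filter (fun i => 0 < c i) with hF
    have hj₀F : j₀ ∈ F := by simp [hF, hj₀]
    obtain ⟨i₁, hi₁F, hmin⟩ := F.exists_min_image (fun i => μ i / c i) ⟨j₀, hj₀F⟩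
    have hci₁ : 0 < c i₁ := by
      have := hi₁F; simp [hF] at this; exact this
    set t : ℝ := μ i₁ / c i₁ with htdef
    have ht0 : 0 ≤ t := div_nonneg (hμ i₁) hci₁.le
    set ν : Fin m → ℝ := fun i => μ i - t * c i with hν
    have hνnonneg : ∀ i, 0 ≤ ν i := by
      intro i
      by_cases hc : 0 < c i
      · have hiF : i ∈ F := by simp [hF, hc]
        have := hmin i hiF
        rw [div_le_div_iff₀ hci₁ hc] at this
        have : t * c i ≤ μ i := by
          rw [htdef, div_mul_eq_mul_div, div_le_iff₀ hci₁]
          nlinarith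
        simp only [hν]; linarith
      · push_neg at hc
        have : t * c i ≤ 0 := mul_nonpos_of_nonneg_of_nonpos ht0 hc
        simp only [hν]; linarith [hμ i]
    have hνsum : ∑ i, ν i • yv i = ∑ i, μ i • yv i := by
      simp only [hν, sub_smul, Finset.sum_sub_distrib]
      have : ∑ i, (t * c i) • yv i = t • ∑ i, c i • yv i := by
        rw [Finset.smul_sum]
        apply Finset.sum_congr rfl
        intro i _
        rw [smul_smul]
      rw [this, hcsum, smul_zero, sub_zero]
    have hνsupp : ∀ i, ν i ≠ 0 → μ i ≠ 0 := by
      intro i hi h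
      by_cases hc : c i = 0
      · apply hi; simp [hν, h, hc]
      · exact (hcsupp i hc) h
    have hνi₁ : ν i₁ = 0 := by
      show μ i₁ - μ i₁ / c i₁ * c i₁ = 0
      rw [div_mul_cancel₀ _ (ne_of_gt hci₁), sub_self]
    have hμi₁ : μ i₁ ≠ 0 := hcsupp i₁ (ne_of_gt hci₁)
    have hssub : Finset.univ.filter (fun i => ν i ≠ 0) ⊂
        Finset.univ.filter (fun i => μ i ≠ 0) := by
      constructor
      · intro i hi
        simp only [Finset.mem_filter, Finset.mem_univ, true_and] at hi ⊢
        exact hνsupp i hi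
      · intro hcon
        have : i₁ ∈ Finset.univ.filter (fun i => ν i ≠ 0) :=
          hcon (by simp [hμi₁])
        simp [hνi₁] at this
    have hcard' : (Finset.univ.filter (fun i => ν i ≠ 0)).card ≤ n := by
      have := Finset.card_lt_card hssub
      omega
    obtain ⟨ν', h1, h2, h3⟩ := ih ν hνnonneg hcard'
    exact ⟨ν', h1, h2.trans hνsum, h3⟩


lemma isClosed_sup_finiteDimensional {Y : Type*} [NormedAddCommGroup Y]
    [NormedSpace ℝ Y] (W S : Submodule ℝ Y) (hW : IsClosed (W : Set Y))
    [FiniteDimensional ℝ S] : IsClosed ((W ⊔ S : Submodule ℝ Y) : Set Y) := by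
  haveI : IsClosed (W : Set Y) := hW
  let q : Y →ₗ[ℝ] Y ⧸ W := W.mkQ
  have hqcont : Continuous q := continuous_quot_mk
  have himg : FiniteDimensional ℝ (Submodule.map q S) := Module.Finite.map S q
  have hclosed : IsClosed ((Submodule.map q S : Submodule ℝ (Y ⧸ W)) : Set (Y ⧸ W)) :=
    Submodule.closed_of_finiteDimensional _
  have key : ((W ⊔ S : Submodule ℝ Y) : Set Y) = q ⁻¹' (Submodule.map q S : Set (Y ⧸ W)) := by
    have : Submodule.comap q (Submodule.map q S) = S ⊔ W := by
      rw [Submodule.comap_map_eq, Submodule.ker_mkQ]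
    rw [← SetLike.coe_set_eq] at this
    rw [sup_comm, ← this]
    rfl
  rw [key]
  exact hclosed.preimage hqcont

/-- Controlled correction: if `B d` is within `p` of `S = span yv`, then `d` can be
corrected by an element of norm `≤ C‖p‖` to land in `B⁻¹ S`. -/
lemma preimage_bound {X Y : Type*} [NormedAddCommGroup X] [InnerProductSpace ℝ X]
    [CompleteSpace X] [NormedAddCommGroup Y] [InnerProductSpace ℝ Y] [CompleteSpace Y]
    {m : ℕ} (yv : Fin m → Y) (B : X →L[ℝ] Y)
    (hBrange : IsClosed ((LinearMap.range (B : X →ₗ[ℝ] Y) : Submodule ℝ Y) : Set Y)) :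
    ∃ C > (0:ℝ), ∀ d : X, ∀ p : Y, B d - p ∈ Submodule.span ℝ (Set.range yv) →
      ∃ u : X, B u ∈ Submodule.span ℝ (Set.range yv) ∧ ‖d - u‖ ≤ C * ‖p‖ := by
  set S : Submodule ℝ Y := Submodule.span ℝ (Set.range yv) with hS
  haveI : FiniteDimensional ℝ S := by
    apply FiniteDimensional.span_of_finite
    exact Set.finite_range yv
  set W : Submodule ℝ Y := LinearMap.range (B : X →ₗ[ℝ] Y) with hW
  set R : Submodule ℝ Y := W ⊔ S with hR
  have hRclosed : IsClosed (R : Set Y) := isClosed_sup_finiteDimensional W S hBrange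
  haveI : CompleteSpace R := hRclosed.completeSpace_coe
  -- the operator (x, μ) ↦ B x + ∑ μ i • yv i, corestricted to R
  let g : (X × (Fin m → ℝ)) →L[ℝ] Y :=
    B.comp (ContinuousLinearMap.fst ℝ X (Fin m → ℝ)) +
      (LinearMap.toContinuousLinearMap (Fintype.linearCombination ℝ yv)).comp
        (ContinuousLinearMap.snd ℝ X (Fin m → ℝ))
  have hgapply : ∀ v : X × (Fin m → ℝ), g v = B v.1 + ∑ i, v.2 i • yv i := by
    intro v
    simp [g, Fintype.linearCombination_apply]
  have hgR : ∀ v, g v ∈ R := by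
    intro v
    rw [hgapply]
    apply Submodule.add_mem
    · exact Submodule.mem_sup_left (LinearMap.mem_range_self (B : X →ₗ[ℝ] Y) v.1)
    · apply Submodule.mem_sup_right
      apply Submodule.sum_mem
      intro i _
      exact Submodule.smul_mem _ _ (Submodule.subset_span (Set.mem_range_self i))
  let f : (X × (Fin m → ℝ)) →L[ℝ] R := g.codRestrict R hgR
  have hfsurj : Function.Surjective f := by
    rintro ⟨y, hy⟩
    rw [hR] at hy
    obtain ⟨w, hw, s, hs, rfl⟩ := Submodule.mem_sup.mp hy
    obtain ⟨x, rfl⟩ := hw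
    rw [hS, Submodule.mem_span_range_iff_exists_fun] at hs
    obtain ⟨μ, hμ⟩ := hs
    refine ⟨(x, μ), ?_⟩
    apply Subtype.ext
    show g (x, μ) = B x + s
    rw [hgapply]
    simp only []
    rw [hμ]
  obtain ⟨C, hC, hsol⟩ := f.exists_preimage_norm_le hfsurj
  refine ⟨C, hC, ?_⟩
  intro d p hp
  have hpR : p ∈ R := by
    have : p = B d - (B d - p) := by abel
    rw [this]
    exact Submodule.sub_mem _ (Submodule.mem_sup_left (LinearMap.mem_range_self (B : X →ₗ[ℝ] Y) d))
      (Submodule.mem_sup_right hp)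
  obtain ⟨v, hv, hvnorm⟩ := hsol ⟨p, hpR⟩
  refine ⟨d - v.1, ?_, ?_⟩
  · have hgv : B v.1 + ∑ i, v.2 i • yv i = p := by
      rw [← hgapply]
      exact congrArg Subtype.val hv
    have : B (d - v.1) = (B d - p) + ∑ i, v.2 i • yv i := by
      rw [map_sub, ← hgv]; abel
    rw [this]
    apply Submodule.add_mem _ hp
    apply Submodule.sum_mem
    intro i _
    exact Submodule.smul_mem _ _ (Submodule.subset_span (Set.mem_range_self i))
  · have h1 : ‖v.1‖ ≤ ‖v‖ := norm_fst_le v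
    have h2 : ‖(⟨p, hpR⟩ : R)‖ = ‖p‖ := rfl
    have : d - (d - v.1) = v.1 := by abel
    rw [this]
    calc ‖v.1‖ ≤ ‖v‖ := h1
      _ ≤ C * ‖(⟨p, hpR⟩ : R)‖ := hvnorm
      _ = C * ‖p‖ := by rw [h2]

/-- A finitely generated cone is closed. -/
lemma cone_isClosed {Y : Type*} [NormedAddCommGroup Y] [NormedSpace ℝ Y] {m : ℕ}
    (yv : Fin m → Y) :
    IsClosed {y : Y | ∃ μ : Fin m → ℝ, (∀ i, 0 ≤ μ i) ∧ y = ∑ i, μ i • yv i} := by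
  classical
  -- for each finset `T`, the image of the orthant under the combination map
  let L : (T : Finset (Fin m)) → (({i // i ∈ T} → ℝ) →ₗ[ℝ] Y) := fun T =>
    Fintype.linearCombination ℝ (fun i : {i // i ∈ T} => yv i)
  let piece : Finset (Fin m) → Set Y := fun T =>
    (L T) '' {μ | ∀ i, 0 ≤ μ i}
  have hdecomp : {y : Y | ∃ μ : Fin m → ℝ, (∀ i, 0 ≤ μ i) ∧ y = ∑ i, μ i • yv i}
      = ⋃ T ∈ {T : Finset (Fin m) |
          LinearIndependent ℝ (fun i : {i // i ∈ T} => yv i)}, piece T := by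
    ext y
    simp only [Set.mem_setOf_eq, Set.mem_iUnion]
    constructor
    · rintro ⟨μ, hμ, rfl⟩
      obtain ⟨ν, hν, hsum, hind⟩ := cone_caratheodory yv
        (Finset.univ.filter (fun i => μ i ≠ 0)).card μ hμ le_rfl
      set T : Finset (Fin m) := Finset.univ.filter (fun i => ν i ≠ 0) with hT
      have hmemT : ∀ i : Fin m, i ∈ T ↔ ν i ≠ 0 := fun i => by simp [hT]
      -- transfer independence along the equivalence of subtypes
      have hindT : LinearIndependent ℝ (fun i : {i // i ∈ T} => yv i) := by
        let e : {i // i ∈ T} ≃ {i : Fin m // ν i ≠ 0} :=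
          (Equiv.subtypeEquivRight hmemT)
        have := hind.comp e e.injective
        exact this
      refine ⟨T, hindT, fun i => ν i.1, fun i => hν i.1, ?_⟩
      show (L T) (fun i => ν i.1) = _
      rw [← hsum]
      show ∑ i : {i // i ∈ T}, ν i.1 • yv i.1 = _
      rw [← Finset.sum_subtype T (fun i => Iff.rfl) (fun i => ν i • yv i)]
      refine Finset.sum_subset (Finset.subset_univ _) ?_
      intro i _ hni
      rw [hmemT] at hni
      push_neg at hni
      simp [hni]
    · rintro ⟨T, hind, μ, hμ, rfl⟩
      refine ⟨fun i => if h : i ∈ T then μ ⟨i, h⟩ else 0, fun i => ?_, ?_⟩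
      · by_cases h : i ∈ T
        · simpa [h] using hμ ⟨i, h⟩
        · simp [h]
      · show (L T) μ = _
        show ∑ i : {i // i ∈ T}, μ i • yv i.1 = _
        beta_reduce
        have e1 : ∑ i : Fin m, (if h : i ∈ T then μ ⟨i, h⟩ else 0) • yv i
            = ∑ i ∈ T, (if h : i ∈ T then μ ⟨i, h⟩ else 0) • yv i :=
          (Finset.sum_subset (Finset.subset_univ T) (fun i _ hni => by simp [hni])).symm
        have e2 : ∑ i ∈ T, (if h : i ∈ T then μ ⟨i, h⟩ else 0) • yv i
            = ∑ i : {i // i ∈ T}, (if h : i.1 ∈ T then μ ⟨i.1, h⟩ else 0) • yv i.1 :=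
          Finset.sum_subtype T (fun i => Iff.rfl) _
        rw [e1, e2]
        apply Finset.sum_congr rfl
        rintro ⟨i, hi⟩ _
        simp [hi]
  rw [hdecomp]
  apply Set.Finite.isClosed_biUnion (Set.toFinite _)
  intro T hT
  have hinj : Function.Injective (L T) := by
    rw [← LinearMap.ker_eq_bot]
    rw [LinearMap.ker_eq_bot']
    intro g hg
    have := Fintype.linearIndependent_iff.mp hT g hg
    funext i
    exact this i
  have hemb := LinearMap.isClosedEmbedding_of_injective
    (LinearMap.ker_eq_bot.mpr hinj) (f := L T)
  have horth : IsClosed {μ : {i // i ∈ T} → ℝ | ∀ i, 0 ≤ μ i} := by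
    have : {μ : {i // i ∈ T} → ℝ | ∀ i, 0 ≤ μ i}
        = ⋂ i, {μ : {i // i ∈ T} → ℝ | 0 ≤ μ i} := by
      ext μ; simp
    rw [this]
    exact isClosed_iInter fun i => isClosed_le continuous_const (continuous_apply i)
  exact hemb.isClosedMap _ horth

set_option maxHeartbeats 2000000 in
/-- unique solvability of the stabilized saddle-point system.
Let `X`, `Y` be real Hilbert spaces, `y₁, …, y_m ∈ Y`, `S = span{y₁,…,y_m}`,
`K = {Σ μᵢ yᵢ : μᵢ ≥ 0}`, `K°` its polar cone.  Let `B : X → Y` be Fredholm and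
`Q : X → X` bounded self-adjoint with `⟪Qx, x⟫ ≥ α‖x‖²` for some `α > 0` and all
`x` with `Bx ∈ S` (in particular all `x ∈ ker B`).  Then there is `σ > 0` such
that for all `0 < ρ ≤ σ` and all `(φ, r)` the system
`λ ∈ K°`, `Qz + B†λ + φ = 0`, `Bz + r − ρλ ∈ K`, `⟪λ, Bz + r − ρλ⟫ = 0`
has exactly one solution `(z, λ)`. -/
theorem stmt6
    {X Y : Type*} [NormedAddCommGroup X] [InnerProductSpace ℝ X] [CompleteSpace X]
    [NormedAddCommGroup Y] [InnerProductSpace ℝ Y] [CompleteSpace Y]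
    {m : ℕ} (yv : Fin m → Y)
    (K : Set Y) (hKdef : K = {y : Y | ∃ μ : Fin m → ℝ, (∀ i, 0 ≤ μ i) ∧ y = ∑ i, μ i • yv i})
    (Kpol : Set Y) (hKpol : Kpol = {l : Y | ∀ y ∈ K, (inner ℝ l y : ℝ) ≤ 0})
    (B : X →L[ℝ] Y)
    (hBker : FiniteDimensional ℝ (LinearMap.ker (B : X →ₗ[ℝ] Y)))
    (hBrange : IsClosed (LinearMap.range (B : X →ₗ[ℝ] Y) : Set Y))
    (hBcodim : FiniteDimensional ℝ (Y ⧸ LinearMap.range (B : X →ₗ[ℝ] Y)))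
    (Q : X →L[ℝ] X)
    (hQsym : ∀ x₁ x₂ : X, (inner ℝ (Q x₁) x₂ : ℝ) = inner ℝ (Q x₂) x₁)
    (α : ℝ) (hα : 0 < α)
    (hQcoer : ∀ x : X, B x ∈ Submodule.span ℝ (Set.range yv) →
      α * ‖x‖ ^ 2 ≤ (inner ℝ (Q x) x : ℝ)) :
    ∃ σ > (0 : ℝ), ∀ ρ : ℝ, 0 < ρ → ρ ≤ σ → ∀ (φ : X) (r : Y),
      ∃! w : X × Y,
        w.2 ∈ Kpol ∧
        Q w.1 + (ContinuousLinearMap.adjoint B) w.2 + φ = 0 ∧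
        B w.1 + r - ρ • w.2 ∈ K ∧
        (inner ℝ w.2 (B w.1 + r - ρ • w.2) : ℝ) = 0 := by
  classical
  set S' : Submodule ℝ Y := Submodule.span ℝ (Set.range yv) with hS'
  -- basic facts about K
  have hK0 : (0 : Y) ∈ K := by
    rw [hKdef]; exact ⟨0, fun i => le_rfl, by simp⟩
  have hKadd : ∀ a ∈ K, ∀ b ∈ K, a + b ∈ K := by
    rw [hKdef]
    rintro a ⟨μ, hμ, rfl⟩ b ⟨ν, hν, rfl⟩
    exact ⟨μ + ν, fun i => add_nonneg (hμ i) (hν i), by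
      simp [add_smul, Finset.sum_add_distrib]⟩
  have hKsmul : ∀ (t : ℝ), 0 ≤ t → ∀ a ∈ K, t • a ∈ K := by
    rw [hKdef]
    rintro t ht a ⟨μ, hμ, rfl⟩
    exact ⟨fun i => t * μ i, fun i => mul_nonneg ht (hμ i), by
      simp [Finset.smul_sum, smul_smul]⟩
  have hKsub : K ⊆ (S' : Set Y) := by
    rw [hKdef]
    rintro y ⟨μ, hμ, rfl⟩
    exact Submodule.sum_mem _ fun i _ =>
      Submodule.smul_mem _ _ (Submodule.subset_span (Set.mem_range_self i))
  have hKcl : IsClosed K := hKdef ▸ cone_isClosed yv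
  -- basic facts about the polar cone
  have hCmem : ∀ l : Y, l ∈ Kpol ↔ ∀ y ∈ K, (inner ℝ l y : ℝ) ≤ 0 := by
    intro l; rw [hKpol]; rfl
  have hC0 : (0 : Y) ∈ Kpol := (hCmem 0).mpr fun y _ => by simp
  have hCadd : ∀ a ∈ Kpol, ∀ b ∈ Kpol, a + b ∈ Kpol := by
    intro a ha b hb
    rw [hCmem] at ha hb ⊢
    intro y hy
    rw [inner_add_left]
    exact add_nonpos (ha y hy) (hb y hy)
  have hCsmul : ∀ (t : ℝ), 0 ≤ t → ∀ a ∈ Kpol, t • a ∈ Kpol := by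
    intro t ht a ha
    rw [hCmem] at ha ⊢
    intro y hy
    rw [real_inner_smul_left]
    exact mul_nonpos_of_nonneg_of_nonpos ht (ha y hy)
  have hCconv : Convex ℝ Kpol := by
    intro a ha b hb s t hs ht _
    exact hCadd _ (hCsmul s hs a ha) _ (hCsmul t ht b hb)
  have hCcl : IsClosed Kpol := by
    have : Kpol = ⋂ y ∈ K, {l : Y | (inner ℝ l y : ℝ) ≤ 0} := by
      ext l; simp [hCmem]
    rw [this]
    exact isClosed_biInter fun y _ =>
      isClosed_le (Continuous.inner continuous_id continuous_const) continuous_const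
  -- the bipolar theorem
  have hbipolar : ∀ v : Y, (∀ l ∈ Kpol, (inner ℝ l v : ℝ) ≤ 0) → v ∈ K := by
    intro v hv
    have hKconv : Convex ℝ K := by
      intro a ha b hb s t hs ht _
      exact hKadd _ (hKsmul s hs a ha) _ (hKsmul t ht b hb)
    obtain ⟨b, ⟨hbK, hbvar⟩, -⟩ := proj_existsUnique K hKconv hKcl ⟨0, hK0⟩ v
    have hl : v - b ∈ Kpol := by
      rw [hCmem]
      intro y hy
      have := hbvar (b + y) (hKadd _ hbK _ hy)
      rwa [add_sub_cancel_left] at this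
    have h0 := hbvar 0 hK0
    have h2 := hbvar ((2:ℝ) • b) (hKsmul 2 (by norm_num) _ hbK)
    rw [zero_sub, inner_neg_right, neg_nonpos] at h0
    have e : (2:ℝ) • b - b = b := by rw [two_smul]; abel
    rw [e] at h2
    have h3 := hv _ hl
    have e2 : (inner ℝ (v - b) v : ℝ) = inner ℝ (v - b) (v - b) + inner ℝ (v - b) b := by
      rw [← inner_add_right, sub_add_cancel]
    have h4 : (inner ℝ (v - b) (v - b) : ℝ) ≤ 0 := by linarith
    have h5 : v - b = 0 := inner_self_eq_zero.mp (le_antisymm h4 real_inner_self_nonneg)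
    rw [sub_eq_zero.mp h5]; exact hbK
  -- the projection onto Kpol
  have hproj := proj_existsUnique Kpol hCconv hCcl ⟨0, hC0⟩
  choose P hP using fun v => (hproj v).exists
  have hPuniq : ∀ v b, b ∈ Kpol → (∀ w ∈ Kpol, (inner ℝ (v - b) (w - b) : ℝ) ≤ 0) →
      b = P v := fun v b hb hvar => (hproj v).unique ⟨hb, hvar⟩ (hP v)
  have hPK : ∀ v : Y, v - P v ∈ K := by
    intro v
    apply hbipolar
    intro l hl
    have := (hP v).2 (P v + l) (hCadd _ (hP v).1 _ hl)
    rw [add_sub_cancel_left] at this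
    rwa [real_inner_comm]
  have hPort : ∀ v : Y, (inner ℝ (v - P v) (P v) : ℝ) = 0 := by
    intro v
    have h1 := (hP v).2 0 hC0
    rw [zero_sub, inner_neg_right, neg_nonpos] at h1
    have h2 := (hP v).2 ((2:ℝ) • P v) (hCsmul 2 (by norm_num) _ (hP v).1)
    have e : (2:ℝ) • P v - P v = P v := by
      rw [two_smul]; abel
    rw [e] at h2
    linarith
  have hPfirm : ∀ v₁ v₂ : Y, ‖P v₁ - P v₂‖ ^ 2 ≤ (inner ℝ (v₁ - v₂) (P v₁ - P v₂) : ℝ) := by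
    intro v₁ v₂
    have h1 := (hP v₁).2 (P v₂) (hP v₂).1
    have h2 := (hP v₂).2 (P v₁) (hP v₁).1
    have expand : ∀ a b x y : Y, (inner ℝ (a - b) (x - y) : ℝ)
        = inner ℝ a x - inner ℝ a y - inner ℝ b x + inner ℝ b y := by
      intros a b x y
      rw [inner_sub_left, inner_sub_right, inner_sub_right]
      ring
    rw [expand] at h1 h2 ⊢
    rw [← real_inner_self_eq_norm_sq, expand]
    linarith [real_inner_comm (P v₁) (P v₂), real_inner_comm v₁ (P v₂),
      real_inner_comm v₂ (P v₁)]
  have hPnonexp : ∀ v₁ v₂ : Y, ‖P v₁ - P v₂‖ ≤ ‖v₁ - v₂‖ := by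
    intro v₁ v₂
    rcases eq_or_lt_of_le (norm_nonneg (P v₁ - P v₂)) with h | h
    · rw [← h]; exact norm_nonneg _
    · have hfirm := hPfirm v₁ v₂
      have hcs := real_inner_le_norm (v₁ - v₂) (P v₁ - P v₂)
      nlinarith
  -- constants
  obtain ⟨C, hCpos, hCbound⟩ := preimage_bound yv B hBrange
  set q : ℝ := ‖Q‖ with hq
  have hq0 : 0 ≤ q := norm_nonneg _
  set M : ℝ := α / 2 + 2 * q ^ 2 / α + q + 1 with hM
  have hMpos : 0 < M := by positivity
  refine ⟨1 / (M * C ^ 2), by positivity, ?_⟩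
  intro ρ hρ hρσ φ r
  -- the reduced operator
  set Λ : X → Y := fun z => (1 / ρ) • P (B z + r) with hΛ
  set T : X → X := fun z => Q z + (ContinuousLinearMap.adjoint B) (Λ z) + φ with hT
  have hρinv : (1:ℝ)/ρ * ρ = 1 := by field_simp
  -- equivalence of the system with T z = 0, λ = Λ z
  have hsys : ∀ w : X × Y,
      (w.2 ∈ Kpol ∧
        Q w.1 + (ContinuousLinearMap.adjoint B) w.2 + φ = 0 ∧
        B w.1 + r - ρ • w.2 ∈ K ∧
        (inner ℝ w.2 (B w.1 + r - ρ • w.2) : ℝ) = 0)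
      ↔ (T w.1 = 0 ∧ w.2 = Λ w.1) := by
    intro w
    constructor
    · rintro ⟨h1, h2, h3, h4⟩
      have hbb : ρ • w.2 = P (B w.1 + r) := by
        apply hPuniq _ _ (hCsmul ρ hρ.le _ h1)
        intro w' hw'
        rw [inner_sub_right]
        have ha1 : (inner ℝ (B w.1 + r - ρ • w.2) w' : ℝ) ≤ 0 := by
          rw [real_inner_comm]
          exact ((hCmem w').mp hw') _ h3
        have ha2 : (inner ℝ (B w.1 + r - ρ • w.2) (ρ • w.2) : ℝ) = 0 := by
          rw [real_inner_smul_right, real_inner_comm, h4, mul_zero]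
        linarith
      have hlam : w.2 = Λ w.1 := by
        rw [hΛ]
        simp only []
        rw [← hbb, smul_smul, hρinv, one_smul]
      exact ⟨by rw [hT]; simp only []; rw [← hlam]; exact h2, hlam⟩
    · rintro ⟨hT0, hlam⟩
      have hbb : ρ • w.2 = P (B w.1 + r) := by
        rw [hlam, hΛ]
        simp only []
        rw [smul_smul, mul_comm ρ, hρinv, one_smul]
      refine ⟨?_, ?_, ?_, ?_⟩
      · rw [hlam]
        exact hCsmul _ (by positivity) _ (hP (B w.1 + r)).1
      · rw [hT] at hT0
        simp only [] at hT0
        rw [hlam]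
        exact hT0
      · rw [hbb]
        exact hPK (B w.1 + r)
      · rw [hbb]
        have := hPort (B w.1 + r)
        rw [hlam, hΛ]
        simp only []
        rw [real_inner_smul_left, real_inner_comm, this, mul_zero]
  -- difference formula for T
  have hTdiff : ∀ z₁ z₂ : X, T z₁ - T z₂
      = Q (z₁ - z₂) + (1/ρ) • (ContinuousLinearMap.adjoint B
          (P (B z₁ + r) - P (B z₂ + r))) := by
    intro z₁ z₂
    rw [hT]
    simp only [hΛ]
    rw [map_sub, map_sub, smul_sub, map_smul, map_smul]
    abel
  have hBd : ∀ z₁ z₂ : X, B (z₁ - z₂) = (B z₁ + r) - (B z₂ + r) := by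
    intro z₁ z₂; rw [map_sub]; abel
  -- strong monotonicity
  have hmono : ∀ z₁ z₂ : X, (α/4) * ‖z₁ - z₂‖ ^ 2
      ≤ (inner ℝ (T z₁ - T z₂) (z₁ - z₂) : ℝ) := by
    intro z₁ z₂
    set d := z₁ - z₂ with hd
    set p := P (B z₁ + r) - P (B z₂ + r) with hp
    have hsplit : (inner ℝ (T z₁ - T z₂) d : ℝ)
        = inner ℝ (Q d) d + (1/ρ) * inner ℝ p (B d) := by
      rw [hTdiff z₁ z₂, inner_add_left, real_inner_smul_left,
        ContinuousLinearMap.adjoint_inner_left]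
    have hfirm : ‖p‖ ^ 2 ≤ (inner ℝ p (B d) : ℝ) := by
      rw [hd, hBd z₁ z₂, real_inner_comm]
      exact hPfirm _ _
    have hmem : B d - p ∈ S' := by
      have e : B d - p = ((B z₁ + r) - P (B z₁ + r)) - ((B z₂ + r) - P (B z₂ + r)) := by
        rw [hd, hBd z₁ z₂, hp]; abel
      rw [e]
      exact Submodule.sub_mem _ (hKsub (hPK _)) (hKsub (hPK _))
    obtain ⟨u, huS, hunorm⟩ := hCbound d p hmem
    set ev := d - u with hev
    have hQu : α * ‖u‖ ^ 2 ≤ (inner ℝ (Q u) u : ℝ) := hQcoer u huS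
    have hQd : (inner ℝ (Q d) d : ℝ)
        = inner ℝ (Q u) u + 2 * inner ℝ (Q u) ev + inner ℝ (Q ev) ev := by
      have e : d = u + ev := by rw [hev]; abel
      rw [e, map_add, inner_add_left, inner_add_right, inner_add_right,
        hQsym ev u]
      ring
    have hb1 : -(q * ‖u‖ * ‖ev‖) ≤ (inner ℝ (Q u) ev : ℝ) := by
      have h := abs_real_inner_le_norm (Q u) ev
      have h2 : ‖Q u‖ ≤ q * ‖u‖ := Q.le_opNorm u
      have := neg_abs_le (inner ℝ (Q u) ev : ℝ)
      nlinarith [norm_nonneg ev, norm_nonneg (Q u)]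
    have hb2 : -(q * ‖ev‖ ^ 2) ≤ (inner ℝ (Q ev) ev : ℝ) := by
      have h := abs_real_inner_le_norm (Q ev) ev
      have h2 : ‖Q ev‖ ≤ q * ‖ev‖ := Q.le_opNorm ev
      have := neg_abs_le (inner ℝ (Q ev) ev : ℝ)
      nlinarith [norm_nonneg ev]
    have hyoung : 2 * q * (‖u‖ * ‖ev‖) ≤ (α/2) * ‖u‖ ^ 2 + (2 * q ^ 2 / α) * ‖ev‖ ^ 2 := by
      have hiden : (α/2) * ‖u‖ ^ 2 + (2 * q ^ 2 / α) * ‖ev‖ ^ 2 - 2 * q * (‖u‖ * ‖ev‖)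
          = (α * ‖u‖ - 2 * q * ‖ev‖) ^ 2 / (2 * α) := by
        field_simp
        ring
      nlinarith [div_nonneg (sq_nonneg (α * ‖u‖ - 2 * q * ‖ev‖)) (by linarith : (0:ℝ) ≤ 2 * α)]
    have hdle : ‖d‖ ^ 2 ≤ 2 * ‖u‖ ^ 2 + 2 * ‖ev‖ ^ 2 := by
      have h := norm_add_le u ev
      have e : u + ev = d := by rw [hev]; abel
      rw [e] at h
      have h2 : ‖d‖ ^ 2 ≤ (‖u‖ + ‖ev‖) ^ 2 := pow_le_pow_left₀ (norm_nonneg d) h 2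
      nlinarith [sq_nonneg (‖u‖ - ‖ev‖)]
    have hevp : ‖ev‖ ^ 2 ≤ C ^ 2 * ‖p‖ ^ 2 := by
      rw [hev]
      calc ‖d - u‖ ^ 2 ≤ (C * ‖p‖) ^ 2 := pow_le_pow_left₀ (norm_nonneg _) hunorm 2
        _ = C ^ 2 * ‖p‖ ^ 2 := by ring
    have hQlower : (α/4) * ‖d‖ ^ 2 - M * (C ^ 2 * ‖p‖ ^ 2) ≤ (inner ℝ (Q d) d : ℝ) := by
      rw [hQd]
      have hev2 : (0:ℝ) ≤ ‖ev‖ ^ 2 := sq_nonneg _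
      have hE : M * ‖ev‖ ^ 2 ≤ M * (C ^ 2 * ‖p‖ ^ 2) :=
        mul_le_mul_of_nonneg_left hevp hMpos.le
      have hD : (α/4) * ‖d‖ ^ 2 ≤ (α/4) * (2 * ‖u‖ ^ 2 + 2 * ‖ev‖ ^ 2) :=
        mul_le_mul_of_nonneg_left hdle (by positivity)
      have hMe : M * ‖ev‖ ^ 2
          = (α/2) * ‖ev‖ ^ 2 + (2 * q ^ 2 / α) * ‖ev‖ ^ 2 + q * ‖ev‖ ^ 2 + ‖ev‖ ^ 2 := by
        rw [hM]; ring
      clear_value q M d p ev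
      linarith [hQu, hb1, hb2, hyoung, hD, hE, hMe, hev2]
    have hρbound : M * C ^ 2 * ‖p‖ ^ 2 ≤ (1/ρ) * inner ℝ p (B d) := by
      have h1ρ : M * C ^ 2 ≤ 1/ρ := by
        have h := (le_div_iff₀ (by positivity : (0:ℝ) < M * C ^ 2)).mp hρσ
        rw [le_div_iff₀ hρ]
        nlinarith [h]
      have hpd : ‖p‖ ^ 2 ≤ (inner ℝ p (B d) : ℝ) := hfirm
      have e1 : (M * C ^ 2) * ‖p‖ ^ 2 ≤ (1/ρ) * ‖p‖ ^ 2 :=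
        mul_le_mul_of_nonneg_right h1ρ (sq_nonneg _)
      have e2 : (1/ρ) * ‖p‖ ^ 2 ≤ (1/ρ) * inner ℝ p (B d) :=
        mul_le_mul_of_nonneg_left hpd (by positivity)
      linarith
    rw [hsplit]
    nlinarith [hQlower, hρbound]
  -- Lipschitz bound
  have hlip : ∀ z₁ z₂ : X, ‖T z₁ - T z₂‖
      ≤ (q + (1/ρ) * ‖ContinuousLinearMap.adjoint B‖ * ‖B‖) * ‖z₁ - z₂‖ := by
    intro z₁ z₂
    rw [hTdiff z₁ z₂]
    have h1 : ‖Q (z₁ - z₂)‖ ≤ q * ‖z₁ - z₂‖ := Q.le_opNorm _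
    have h2 : ‖(1/ρ) • (ContinuousLinearMap.adjoint B
        (P (B z₁ + r) - P (B z₂ + r)))‖
        ≤ (1/ρ) * (‖ContinuousLinearMap.adjoint B‖ * (‖B‖ * ‖z₁ - z₂‖)) := by
      rw [norm_smul, Real.norm_eq_abs, abs_of_pos (by positivity : (0:ℝ) < 1/ρ)]
      apply mul_le_mul_of_nonneg_left _ (by positivity : (0:ℝ) ≤ 1/ρ)
      calc ‖ContinuousLinearMap.adjoint B (P (B z₁ + r) - P (B z₂ + r))‖
          ≤ ‖ContinuousLinearMap.adjoint B‖ * ‖P (B z₁ + r) - P (B z₂ + r)‖ :=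
            (ContinuousLinearMap.adjoint B).le_opNorm _
        _ ≤ ‖ContinuousLinearMap.adjoint B‖ * (‖B‖ * ‖z₁ - z₂‖) := by
            apply mul_le_mul_of_nonneg_left _ (norm_nonneg _)
            calc ‖P (B z₁ + r) - P (B z₂ + r)‖ ≤ ‖(B z₁ + r) - (B z₂ + r)‖ :=
                  hPnonexp _ _
              _ = ‖B (z₁ - z₂)‖ := by rw [hBd z₁ z₂]
              _ ≤ ‖B‖ * ‖z₁ - z₂‖ := B.le_opNorm _
    calc ‖Q (z₁ - z₂) + (1/ρ) • (ContinuousLinearMap.adjoint B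
          (P (B z₁ + r) - P (B z₂ + r)))‖
        ≤ ‖Q (z₁ - z₂)‖ + ‖(1/ρ) • (ContinuousLinearMap.adjoint B
          (P (B z₁ + r) - P (B z₂ + r)))‖ := norm_add_le _ _
      _ ≤ q * ‖z₁ - z₂‖ + (1/ρ) * (‖ContinuousLinearMap.adjoint B‖ * (‖B‖ * ‖z₁ - z₂‖)) := by
          linarith
      _ = (q + (1/ρ) * ‖ContinuousLinearMap.adjoint B‖ * ‖B‖) * ‖z₁ - z₂‖ := by ring
  -- conclude
  obtain ⟨z₀, hz₀, hz₀uniq⟩ := strongMono_existsUnique_zero T (α/4)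
    (q + (1/ρ) * ‖ContinuousLinearMap.adjoint B‖ * ‖B‖) (by linarith) hmono hlip
  refine ⟨(z₀, Λ z₀), (hsys (z₀, Λ z₀)).mpr ⟨hz₀, rfl⟩, ?_⟩
  rintro w hw
  obtain ⟨hT0, hlam⟩ := (hsys w).mp hw
  have h1 : w.1 = z₀ := hz₀uniq w.1 hT0
  have h2 : w.2 = Λ z₀ := by rw [hlam, h1]
  exact Prod.ext h1 h2
end

section
/- Let Z and Y be real Hilbert spaces, B : Z → Y a Fredholm bounded linear operator, and Q : Z → Z a bounded self-adjoint linear operator such that ⟪Qz, z⟫ ≥ α‖z‖² for all z ∈ ker B, for some α > 0. Define F : Z × Y → Z × Y by F(z, λ) = (Qz + B†λ, Bz). Then there exists β > 0 such that for all (z, λ), (z̄, λ̄) ∈ Z × Y: ‖z − z̄‖ ≤ β ‖F(z, λ) − F(z̄, λ̄)‖; that is, the z-component of any solution of F(z, λ) = ψ depends Lipschitz continuously on ψ. -/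
set_option maxHeartbeats 1000000


/-- Let `Z`, `Y` be real Hilbert spaces, `B : Z → Y` Fredholm,
`Q : Z → Z` bounded self-adjoint with `⟪Qz, z⟫ ≥ α‖z‖²` on `ker B` for some
`α > 0`.  Define `F(z, λ) = (Qz + B†λ, Bz)`.  Then there exists `β > 0` such
that for all `(z, λ), (z̄, λ̄)`:
`‖z − z̄‖ ≤ β ‖F(z, λ) − F(z̄, λ̄)‖`, with the norm `‖(u, v)‖ = ‖u‖ + ‖v‖` on the
product; i.e. the `z`-component of a solution of `F(z, λ) = ψ` depends Lipschitz
continuously on `ψ`. -/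
theorem stmt11
    {Z Y : Type*} [NormedAddCommGroup Z] [InnerProductSpace ℝ Z] [CompleteSpace Z]
    [NormedAddCommGroup Y] [InnerProductSpace ℝ Y] [CompleteSpace Y]
    (B : Z →L[ℝ] Y)
    (hBker : FiniteDimensional ℝ (LinearMap.ker (B : Z →ₗ[ℝ] Y)))
    (hBrange : IsClosed (LinearMap.range (B : Z →ₗ[ℝ] Y) : Set Y))
    (hBcodim : FiniteDimensional ℝ (Y ⧸ LinearMap.range (B : Z →ₗ[ℝ] Y)))
    (Q : Z →L[ℝ] Z)
    (hQsym : ∀ z₁ z₂ : Z, (inner ℝ (Q z₁) z₂ : ℝ) = inner ℝ (Q z₂) z₁)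
    (α : ℝ) (hα : 0 < α)
    (hQcoer : ∀ z ∈ LinearMap.ker (B : Z →ₗ[ℝ] Y), α * ‖z‖ ^ 2 ≤ (inner ℝ (Q z) z : ℝ)) :
    ∃ β > (0 : ℝ), ∀ (z zb : Z) (lam lamb : Y),
      ‖z - zb‖ ≤ β *
        (‖(Q z + (ContinuousLinearMap.adjoint B) lam) -
           (Q zb + (ContinuousLinearMap.adjoint B) lamb)‖ + ‖B z - B zb‖) := by
  classical
  set N := LinearMap.ker (B : Z →ₗ[ℝ] Y) with hN
  haveI : FiniteDimensional ℝ N := hBker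
  haveI : CompleteSpace (LinearMap.range (B : Z →ₗ[ℝ] Y)) := hBrange.completeSpace_coe
  set B' : (Nᗮ : Submodule ℝ Z) →L[ℝ] (LinearMap.range (B : Z →ₗ[ℝ] Y)) :=
    ContinuousLinearMap.codRestrict (B.comp (Nᗮ).subtypeL) (LinearMap.range (B : Z →ₗ[ℝ] Y))
      (fun v => LinearMap.mem_range_self _ _) with hB'
  have hB'app : ∀ v : (Nᗮ : Submodule ℝ Z), ((B' v : Y)) = B (v : Z) := fun v => rfl
  have hinj : LinearMap.ker (B' : (Nᗮ : Submodule ℝ Z) →ₗ[ℝ] (LinearMap.range (B : Z →ₗ[ℝ] Y))) = ⊥ := by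
    rw [LinearMap.ker_eq_bot']
    intro v hv
    have h1 : B (v : Z) = 0 := by
      have := congrArg (Subtype.val) hv
      simpa [hB'app] using this
    have h2 : (v : Z) ∈ N := h1
    have h3 : (inner ℝ ((v:Z)) ((v:Z)) : ℝ) = 0 := by
      have := v.2
      rw [Submodule.mem_orthogonal] at this
      exact this _ h2
    have : (v : Z) = 0 := by
      rwa [inner_self_eq_zero] at h3
    exact Subtype.ext this
  have hsurj : LinearMap.range (B' : (Nᗮ : Submodule ℝ Z) →ₗ[ℝ] (LinearMap.range (B : Z →ₗ[ℝ] Y))) = ⊤ := by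
    rw [LinearMap.range_eq_top]
    rintro ⟨y, z, rfl⟩
    refine ⟨⟨z - (N.orthogonalProjectionOnto z : Z), N.sub_starProjection_mem_orthogonal z⟩, ?_⟩
    apply Subtype.ext
    have hker : B (N.starProjection z) = 0 := (N.orthogonalProjectionOnto z).2
    simp [hB'app, map_sub, hker]
  let e := ContinuousLinearEquiv.ofBijective B' hinj hsurj
  set C := ‖(e.symm : (LinearMap.range (B : Z →ₗ[ℝ] Y)) →L[ℝ] (Nᗮ : Submodule ℝ Z))‖ with hC
  have hC0 : 0 ≤ C := norm_nonneg _
  have hbound : ∀ v : (Nᗮ : Submodule ℝ Z), ‖(v:Z)‖ ≤ C * ‖B (v:Z)‖ := by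
    intro v
    have h1 : v = e.symm (e v) := (e.symm_apply_apply v).symm
    have h2 : ‖(v:Z)‖ = ‖v‖ := rfl
    calc ‖(v:Z)‖ = ‖e.symm (e v)‖ := by rw [← h1]; exact h2
      _ ≤ C * ‖e v‖ := (e.symm : (LinearMap.range (B : Z →ₗ[ℝ] Y)) →L[ℝ] (Nᗮ : Submodule ℝ Z)).le_opNorm _
      _ = C * ‖B (v:Z)‖ := rfl
  set nQ := ‖Q‖ with hnQ
  refine ⟨1/α + (nQ/α + 1) * C + 1, by positivity, ?_⟩
  intro z zb lam lamb
  set w := z - zb with hw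
  set μ := lam - lamb with hμ
  have hFeq : (Q z + (ContinuousLinearMap.adjoint B) lam) -
      (Q zb + (ContinuousLinearMap.adjoint B) lamb)
      = Q w + (ContinuousLinearMap.adjoint B) μ := by
    rw [hw, hμ, map_sub Q, map_sub (ContinuousLinearMap.adjoint B)]; abel
  have hBeq : B z - B zb = B w := by rw [hw, map_sub]
  rw [hFeq, hBeq]
  set S := ‖Q w + (ContinuousLinearMap.adjoint B) μ‖ with hS
  have hS0 : 0 ≤ S := norm_nonneg _
  set u : Z := (N.orthogonalProjectionOnto w : Z) with hu
  set v : Z := w - u with hv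
  have hvmem : v ∈ Nᗮ := N.sub_starProjection_mem_orthogonal w
  have humem : u ∈ N := (N.orthogonalProjectionOnto w).2
  have hBu : B u = 0 := humem
  have hBv : B v = B w := by rw [hv, map_sub, hBu, sub_zero]
  have hvle : ‖v‖ ≤ C * ‖B w‖ := by
    have := hbound ⟨v, hvmem⟩
    simpa [hBv] using this
  -- coercivity estimate on u
  have hule : α * ‖u‖ ≤ S + nQ * ‖v‖ := by
    have hadj : (inner ℝ ((ContinuousLinearMap.adjoint B) μ) u : ℝ) = 0 := by
      rw [ContinuousLinearMap.adjoint_inner_left, hBu, inner_zero_right]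
    have hsplit : (inner ℝ (Q u) u : ℝ)
        = inner ℝ (Q w + (ContinuousLinearMap.adjoint B) μ) u - inner ℝ (Q v) u := by
      have hwuv : w = u + v := by rw [hv]; abel
      rw [inner_add_left, hadj, hwuv, map_add, inner_add_left]
      ring
    have h1 : (inner ℝ (Q w + (ContinuousLinearMap.adjoint B) μ) u : ℝ) ≤ S * ‖u‖ :=
      real_inner_le_norm _ _
    have h2 : -(inner ℝ (Q v) u : ℝ) ≤ nQ * ‖v‖ * ‖u‖ := by
      calc -(inner ℝ (Q v) u : ℝ) ≤ |(inner ℝ (Q v) u : ℝ)| := neg_le_abs _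
        _ ≤ ‖Q v‖ * ‖u‖ := abs_real_inner_le_norm _ _
        _ ≤ nQ * ‖v‖ * ‖u‖ := mul_le_mul_of_nonneg_right (Q.le_opNorm v) (norm_nonneg u)
    have hco : α * ‖u‖ ^ 2 ≤ (inner ℝ (Q u) u : ℝ) := hQcoer u humem
    have key : α * ‖u‖ ^ 2 ≤ (S + nQ * ‖v‖) * ‖u‖ := by
      rw [hsplit] at hco
      have hexp : (S + nQ * ‖v‖) * ‖u‖ = S * ‖u‖ + nQ * ‖v‖ * ‖u‖ := by ring
      linarith
    rcases eq_or_lt_of_le (norm_nonneg u) with h | h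
    · rw [← h, mul_zero]
      have : 0 ≤ nQ * ‖v‖ := mul_nonneg (norm_nonneg _) (norm_nonneg _)
      linarith
    · refine le_of_mul_le_mul_right ?_ h
      calc α * ‖u‖ * ‖u‖ = α * ‖u‖ ^ 2 := by ring
        _ ≤ (S + nQ * ‖v‖) * ‖u‖ := key
  have hwle : ‖w‖ ≤ ‖u‖ + ‖v‖ := by
    have hwuv : w = u + v := by rw [hv]; abel
    rw [hwuv]; exact norm_add_le _ _
  have hule' : ‖u‖ ≤ (S + nQ * ‖v‖) / α := by
    rw [le_div_iff₀ hα]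
    calc ‖u‖ * α = α * ‖u‖ := by ring
      _ ≤ S + nQ * ‖v‖ := hule
  have hnQ0 : 0 ≤ nQ := norm_nonneg _
  have hBw0 : 0 ≤ ‖B w‖ := norm_nonneg _
  have hv0 : 0 ≤ ‖v‖ := norm_nonneg _
  have h4 : (0:ℝ) ≤ nQ / α + 1 := by positivity
  calc ‖w‖ ≤ ‖u‖ + ‖v‖ := hwle
    _ ≤ (S + nQ * ‖v‖) / α + ‖v‖ := by linarith
    _ = S / α + (nQ / α + 1) * ‖v‖ := by field_simp; ring
    _ ≤ S / α + (nQ / α + 1) * (C * ‖B w‖) := by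
        have := mul_le_mul_of_nonneg_left hvle h4
        linarith
    _ ≤ (1/α + (nQ/α + 1) * C + 1) * (S + ‖B w‖) := by
        have p1 : (0:ℝ) ≤ (nQ/α + 1) * C * S :=
          mul_nonneg (mul_nonneg h4 hC0) hS0
        have p2 : (0:ℝ) ≤ (1/α) * ‖B w‖ := by positivity
        have hexp : (1/α + (nQ/α + 1) * C + 1) * (S + ‖B w‖)
            = S/α + (nQ/α + 1) * (C * ‖B w‖)
              + ((nQ/α + 1) * C * S + (1/α) * ‖B w‖ + S + ‖B w‖) := by
          field_simp
          ring
        rw [hexp]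
        linarith
end
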